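/- arXiv:1111.4319 — 7 statements merged into one kernel-verified Lean document; each statement's English description precedes it below -/
import Mathlib

section
/- Let q be a prime power and let 1 ≤ r ≤ k ≤ n be integers. Then 𝒞_q(n,k,r) ≥ ⌈ ((q^n−1)/(q^k−1)) · 𝒞_q(n−1,k−1,r−1) ⌉ (the q-analog of the Schönheim bound). -/
open Module

/-- `coveringNumber F n k r` is the minimum number of `k`-dimensional `F`-linear subspaces
of `F^n` needed so that every `r`-dimensional subspace is contained in at least one of them. -/
noncomputable def coveringNumber (F : Type) [Field F] (n k r : ℕ) : ℕ :=
  sInf { m : ℕ | ∃ S : Finset (Submodule F (Fin n → F)),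
    S.card = m ∧
    (∀ X ∈ S, finrank F X = k) ∧
    (∀ Y : Submodule F (Fin n → F), finrank F Y = r → ∃ X ∈ S, Y ≤ X) }

section Aux

variable {K V : Type*} [Field K] [AddCommGroup V] [Module K V]

/-- Any subspace of dimension at most `j ≤ dim V` is contained in a subspace of dimension `j`. -/
lemma exists_superspace [FiniteDimensional K V] (Y : Submodule K V) :
    ∀ j, finrank K Y ≤ j → j ≤ finrank K V →
      ∃ X : Submodule K V, Y ≤ X ∧ finrank K X = j := by
  intro j
  induction j with
  | zero => exact fun h1 _ => ⟨Y, le_rfl, Nat.le_antisymm h1 (Nat.zero_le _)⟩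
  | succ j ih =>
    intro h1 h2
    rcases Nat.lt_or_ge (finrank K Y) (j + 1) with h | h
    · obtain ⟨X, hYX, hX⟩ := ih (Nat.lt_succ_iff.mp h) (by omega)
      have hlt : finrank K X < finrank K V := by omega
      obtain ⟨m, hm⟩ := X.exists_of_finrank_lt hlt
      have hm1 : m ∉ X := by simpa using hm 1 one_ne_zero
      have hm0 : m ≠ 0 := fun h0 => hm1 (h0 ▸ X.zero_mem)
      refine ⟨X ⊔ (K ∙ m), le_trans hYX le_sup_left, ?_⟩
      have hdisj : X ⊓ (K ∙ m) = ⊥ := by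
        rw [← disjoint_iff]
        exact (Submodule.disjoint_span_singleton (K := K) (x := m)).mpr
          (fun hmem => absurd hmem hm1)
      have hsum := Submodule.finrank_sup_add_finrank_inf_eq X (K ∙ m)
      rw [hdisj, finrank_bot, finrank_span_singleton hm0, hX] at hsum
      omega
    · exact ⟨Y, le_rfl, Nat.le_antisymm h1 h⟩

/-- Rank-nullity for the image of a subspace in a quotient. -/
lemma finrank_map_mkQ [FiniteDimensional K V] (P X : Submodule K V) (hPX : P ≤ X) :
    finrank K (X.map P.mkQ) + finrank K P = finrank K X := by
  have h1 : LinearMap.range (P.mkQ.comp X.subtype) = X.map P.mkQ := by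
    rw [LinearMap.range_comp, Submodule.range_subtype]
  have h2 : LinearMap.ker (P.mkQ.comp X.subtype) = P.comap X.subtype := by
    rw [LinearMap.ker_comp, Submodule.ker_mkQ]
  have h3 := LinearMap.finrank_range_add_finrank_ker (P.mkQ.comp X.subtype)
  rw [h1, h2] at h3
  rw [← h3]
  congr 1
  exact ((Submodule.comapSubtypeEquivOfLe hPX).finrank_eq).symm

end Aux

/-- Key lemma: the number of blocks through a nonzero vector is at least the covering
number of the quotient design. -/
lemma key_count (F : Type) [Field F] [Fintype F] {n k r : ℕ}
    (hr : 1 ≤ r) (hrk : r ≤ k)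
    (S : Finset (Submodule F (Fin n → F)))
    (hSdim : ∀ X ∈ S, finrank F X = k)
    (hScov : ∀ Y : Submodule F (Fin n → F), finrank F Y = r → ∃ X ∈ S, Y ≤ X)
    (v : Fin n → F) (hv : v ≠ 0)
    [DecidablePred (fun X : Submodule F (Fin n → F) => v ∈ X)] :
    coveringNumber F (n - 1) (k - 1) (r - 1) ≤ (S.filter (fun X => v ∈ X)).card := by
  classical
  set P : Submodule F (Fin n → F) := F ∙ v with hPdef
  have hP : finrank F P = 1 := finrank_span_singleton hv
  have hQ : finrank F ((Fin n → F) ⧸ P) = n - 1 := by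
    rw [Submodule.finrank_quotient, Module.finrank_fin_fun, hP]
  obtain ⟨e⟩ : Nonempty (((Fin n → F) ⧸ P) ≃ₗ[F] (Fin (n - 1) → F)) :=
    FiniteDimensional.nonempty_linearEquiv_of_finrank_eq
      (by rw [hQ, Module.finrank_fin_fun])
  set f : Submodule F (Fin n → F) → Submodule F (Fin (n - 1) → F) :=
    fun X => (X.map P.mkQ).map (e : ((Fin n → F) ⧸ P) →ₗ[F] (Fin (n - 1) → F)) with hfdef
  set T := (S.filter (fun X => v ∈ X)).image f with hTdef
  have hTle : T.card ≤ (S.filter (fun X => v ∈ X)).card := Finset.card_image_le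
  refine le_trans (Nat.sInf_le ?_) hTle
  refine ⟨T, rfl, ?_, ?_⟩
  · intro Z hZ
    obtain ⟨X, hXf, rfl⟩ := Finset.mem_image.mp hZ
    obtain ⟨hXS, hvX⟩ := Finset.mem_filter.mp hXf
    have hPX : P ≤ X := (Submodule.span_singleton_le_iff_mem v X).mpr hvX
    have hrk' := finrank_map_mkQ P X hPX
    rw [hP, hSdim X hXS] at hrk'
    show finrank F ((X.map P.mkQ).map
      (e : ((Fin n → F) ⧸ P) →ₗ[F] (Fin (n - 1) → F))) = k - 1
    rw [LinearEquiv.finrank_map_eq]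
    omega
  · intro W hW
    set W'' := W.map (e.symm : (Fin (n - 1) → F) →ₗ[F] ((Fin n → F) ⧸ P)) with hW''def
    set W' := W''.comap P.mkQ with hW'def
    have hPW' : P ≤ W' := by
      intro x hx
      have : P.mkQ x = 0 := by
        simpa [Submodule.mkQ_apply] using (Submodule.Quotient.mk_eq_zero P).mpr hx
      simp [hW'def, Submodule.mem_comap, this]
    have hmap : W'.map P.mkQ = W'' :=
      Submodule.map_comap_eq_of_surjective P.mkQ_surjective _
    have hW''r : finrank F W'' = r - 1 := by
      rw [hW''def, LinearEquiv.finrank_map_eq, hW]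
    have hW'r : finrank F W' = r := by
      have h := finrank_map_mkQ P W' hPW'
      rw [hP, hmap, hW''r] at h
      omega
    obtain ⟨X, hXS, hWX⟩ := hScov W' hW'r
    have hvX : v ∈ X := hWX (hPW' (Submodule.mem_span_singleton_self v))
    refine ⟨f X, Finset.mem_image_of_mem f (Finset.mem_filter.mpr ⟨hXS, hvX⟩), ?_⟩
    have hWeq : W = W''.map (e : ((Fin n → F) ⧸ P) →ₗ[F] (Fin (n - 1) → F)) := by
      rw [hW''def, ← Submodule.map_comp]
      simp
    rw [hWeq, ← hmap]
    exact Submodule.map_mono (Submodule.map_mono hWX)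

/-- The q-analog of the Schönheim bound. -/
theorem schonheim_bound (q n k r : ℕ) (hq : IsPrimePow q)
    (hr : 1 ≤ r) (hrk : r ≤ k) (hkn : k ≤ n)
    (F : Type) [Field F] [Fintype F] (hF : Fintype.card F = q) :
    (coveringNumber F n k r : ℤ) ≥
      ⌈(((q : ℚ) ^ n - 1) / ((q : ℚ) ^ k - 1)) *
        (coveringNumber F (n - 1) (k - 1) (r - 1) : ℚ)⌉ := by
  classical
  have hq2 : 2 ≤ q := hq.two_le
  have hk1 : 1 ≤ k := le_trans hr hrk
  -- the defining set for (n, k, r) is nonempty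
  have : Finite (Submodule F (Fin n → F)) :=
    Finite.of_injective _ SetLike.coe_injective
  have : Fintype (Submodule F (Fin n → F)) := Fintype.ofFinite _
  have hAne : { m : ℕ | ∃ S : Finset (Submodule F (Fin n → F)),
      S.card = m ∧
      (∀ X ∈ S, finrank F X = k) ∧
      (∀ Y : Submodule F (Fin n → F), finrank F Y = r → ∃ X ∈ S, Y ≤ X) }.Nonempty := by
    refine ⟨(Finset.univ.filter (fun X : Submodule F (Fin n → F) => finrank F X = k)).card,
      Finset.univ.filter (fun X => finrank F X = k), rfl, ?_, ?_⟩
    · intro X hX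
      exact (Finset.mem_filter.mp hX).2
    · intro Y hY
      obtain ⟨X, hYX, hX⟩ := exists_superspace Y k (by omega) (by
        rw [Module.finrank_fin_fun]; exact hkn)
      exact ⟨X, Finset.mem_filter.mpr ⟨Finset.mem_univ X, hX⟩, hYX⟩
  have hmem := Nat.sInf_mem hAne
  obtain ⟨S, hScard, hSdim, hScov⟩ := hmem
  set m := coveringNumber F n k r with hm
  set C' := coveringNumber F (n - 1) (k - 1) (r - 1) with hC'
  -- double counting
  set V0 : Finset (Fin n → F) := Finset.univ.filter (fun v => v ≠ 0) with hV0
  have hdouble : ∑ X ∈ S, (V0.filter (fun v => v ∈ X)).card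
      = ∑ v ∈ V0, (S.filter (fun X => v ∈ X)).card := by
    simp_rw [Finset.card_filter]
    rw [Finset.sum_comm]
  have hleft : ∀ X ∈ S, (V0.filter (fun v => v ∈ X)).card = q ^ k - 1 := by
    intro X hX
    have h1 : V0.filter (fun v => v ∈ X)
        = (Finset.univ.filter (fun v => v ∈ X)).filter (fun v => v ≠ 0) := by
      simp only [hV0, Finset.filter_filter]
      congr 1
      ext v
      exact and_comm
    have h2 : (Finset.univ.filter (fun v : Fin n → F => v ∈ X)).card = Fintype.card X := by
      rw [Fintype.card_subtype]
    rw [h1, Finset.filter_ne', Finset.card_erase_of_mem (by simp [X.zero_mem]), h2]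
    have h3 : Fintype.card X = q ^ k := by
      rw [card_eq_pow_finrank (K := F) (V := X), hF, hSdim X hX]
    rw [h3]
  have hV0card : V0.card = q ^ n - 1 := by
    rw [hV0, Finset.filter_ne', Finset.card_erase_of_mem (Finset.mem_univ _),
      Finset.card_univ, Fintype.card_fun, Fintype.card_fin, hF]
  have hnat : (q ^ n - 1) * C' ≤ m * (q ^ k - 1) := by
    calc (q ^ n - 1) * C' = ∑ _v ∈ V0, C' := by rw [Finset.sum_const, hV0card, smul_eq_mul]
    _ ≤ ∑ v ∈ V0, (S.filter (fun X => v ∈ X)).card := by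
        refine Finset.sum_le_sum (fun v hvV => ?_)
        have hv : v ≠ 0 := (Finset.mem_filter.mp hvV).2
        exact key_count F hr hrk S hSdim hScov v hv
    _ = ∑ X ∈ S, (V0.filter (fun v => v ∈ X)).card := hdouble.symm
    _ = m * (q ^ k - 1) := by
        rw [Finset.sum_congr rfl hleft, Finset.sum_const, smul_eq_mul, hScard]
        rfl
  -- conclude over ℚ
  have hqn : 1 ≤ q ^ n := Nat.one_le_pow _ _ (by omega)
  have hqk : 1 ≤ q ^ k := Nat.one_le_pow _ _ (by omega)
  have hpos : (0 : ℚ) < (q : ℚ) ^ k - 1 := by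
    have h1 : 1 < q ^ k := Nat.one_lt_pow (by omega) (by omega)
    have h2 : (1 : ℚ) < (q : ℚ) ^ k := by exact_mod_cast h1
    linarith
  rw [ge_iff_le, Int.ceil_le]
  have hcast : ((q : ℚ) ^ n - 1) * (C' : ℚ) ≤ (m : ℚ) * ((q : ℚ) ^ k - 1) := by
    calc ((q : ℚ) ^ n - 1) * (C' : ℚ) = (((q ^ n - 1) * C' : ℕ) : ℚ) := by
          push_cast [Nat.cast_sub hqn]; ring
    _ ≤ ((m * (q ^ k - 1) : ℕ) : ℚ) := by exact_mod_cast hnat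
    _ = (m : ℚ) * ((q : ℚ) ^ k - 1) := by push_cast [Nat.cast_sub hqk]; ring
  push_cast
  rw [div_mul_eq_mul_div, div_le_iff₀ hpos]
  exact hcast
end

section
/- Let q be a prime power and let k, n be integers with 2 ≤ k ≤ n−1. Then, as an inequality of rational numbers, 𝒞_q(n,k,k−1) ≥ ((q^k−1)(q−1)/(q^{n−k}−1)^2) · [n,k+1]_q (the q-analog of de Caen's bound). -/
open Module Finset

set_option linter.unusedSectionVars false

section AuxCounting

variable {F : Type} [Field F] [Fintype F]



/-- generic double counting -/
lemma my_double_count {α β : Type*} (s : Finset α) (t : Finset β) (r : α → β → Prop)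
    [∀ a b, Decidable (r a b)] :
    ∑ a ∈ s, (t.filter (fun b => r a b)).card = ∑ b ∈ t, (s.filter (fun a => r a b)).card := by
  simp_rw [Finset.card_filter]
  exact Finset.sum_comm

/-- number of lines: `#lines * (q-1) = q^m - 1`. -/
lemma my_lines_count (V : Type) [AddCommGroup V] [Module F V] [Finite V] :
    Nat.card {L : Submodule F V // finrank F L = 1} * (Fintype.card F - 1)
      = Fintype.card F ^ finrank F V - 1 := by
  classical
  have : Fintype V := Fintype.ofFinite V
  have hfd : FiniteDimensional F V := Module.Finite.of_finite (R := F) (M := V)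
  have hcardV : Fintype.card V = Fintype.card F ^ finrank F V := card_eq_pow_finrank
  -- count nonzero vectors fiberwise by span
  have hfib : ∀ L ∈ (univ.filter (fun L : Submodule F V => finrank F L = 1)),
      ((univ.filter (fun v : V => v ≠ 0)).filter
        (fun v => Submodule.span F {v} = L)).card = Fintype.card F - 1 := by
    intro L hL
    rw [mem_filter] at hL
    have hL1 := hL.2
    have : ∀ v : V, ((v ≠ 0) ∧ Submodule.span F {v} = L) ↔ (v ∈ L ∧ v ≠ 0) := by
      intro v
      constructor
      · rintro ⟨hv0, rfl⟩
        exact ⟨Submodule.mem_span_singleton_self v, hv0⟩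
      · rintro ⟨hvL, hv0⟩
        refine ⟨hv0, ?_⟩
        apply Submodule.eq_of_le_of_finrank_eq
        · rwa [Submodule.span_singleton_le_iff_mem]
        · rw [finrank_span_singleton hv0, hL1]
    rw [filter_filter]
    simp_rw [this]
    have : (univ.filter (fun v : V => v ∈ L ∧ v ≠ 0)).card
        = Fintype.card {v : V // v ∈ L ∧ v ≠ 0} := (Fintype.card_subtype _).symm
    rw [this]
    have e : {v : V // v ∈ L ∧ v ≠ 0} ≃ {x : L // x ≠ 0} :=
      { toFun := fun v => ⟨⟨v.1, v.2.1⟩, by simpa [Submodule.mk_eq_zero] using v.2.2⟩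
        invFun := fun x => ⟨x.1.1, x.1.2, by simpa [Submodule.mk_eq_zero] using x.2⟩
        left_inv := fun v => rfl
        right_inv := fun x => rfl }
    rw [Fintype.card_congr e]
    have hLcard : Fintype.card L = Fintype.card F := by
      have : Fintype.card L = Fintype.card F ^ finrank F L := card_eq_pow_finrank
      rw [this, hL1, pow_one]
    have : Fintype.card {x : L // x ≠ 0} = Fintype.card L - 1 := by
      have := Fintype.card_subtype_compl (fun x : L => x = 0)
      simpa [Fintype.card_subtype_eq] using this
    rw [this, hLcard]
  have hmain := Finset.card_eq_sum_card_fiberwise (f := fun v : V => Submodule.span F {v})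
    (s := univ.filter (fun v : V => v ≠ 0))
    (t := univ.filter (fun L : Submodule F V => finrank F L = 1)) ?_
  · rw [Finset.sum_congr rfl hfib, Finset.sum_const, smul_eq_mul] at hmain
    have hcnt : (univ.filter (fun v : V => v ≠ 0)).card = Fintype.card V - 1 := by
      rw [Finset.filter_ne', Finset.card_erase_of_mem (mem_univ _), Finset.card_univ]
    rw [hcnt, hcardV] at hmain
    rw [Nat.card_eq_fintype_card, Fintype.card_subtype]
    omega
  · intro v hv
    rw [mem_coe, mem_filter] at hv ⊢
    exact ⟨mem_univ _, finrank_span_singleton hv.2⟩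


lemma my_finrank_map_subtype {V : Type} [AddCommGroup V] [Module F V]
    (X : Submodule F V) (W : Submodule F ↥X) :
    finrank F (W.map X.subtype) = finrank F W :=
  (Submodule.equivMapOfInjective X.subtype X.injective_subtype W).symm.finrank_eq

/-- subspaces of `X` inside the ambient lattice vs submodules of `↥X` -/
lemma my_sub_equiv {V : Type} [AddCommGroup V] [Module F V] (X : Submodule F V) (j : ℕ) :
    Nat.card {T : Submodule F V // finrank F T = j ∧ T ≤ X}
      = Nat.card {W : Submodule F ↥X // finrank F W = j} := by
  apply Nat.card_congr
  refine
    { toFun := fun T => ⟨T.1.comap X.subtype, ?_⟩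
      invFun := fun W => ⟨W.1.map X.subtype, ?_, Submodule.map_subtype_le _ _⟩
      left_inv := ?_
      right_inv := ?_ }
  · have hmc : (T.1.comap X.subtype).map X.subtype = T.1 := by
      rw [Submodule.map_comap_subtype, inf_eq_right.mpr T.2.2]
    have := my_finrank_map_subtype X (T.1.comap X.subtype)
    rw [hmc] at this
    rw [← this, T.2.1]
  · rw [my_finrank_map_subtype, W.2]
  · rintro ⟨T, hT⟩
    apply Subtype.ext
    simp only
    rw [Submodule.map_comap_subtype, inf_eq_right.mpr hT.2]
  · rintro ⟨W, hW⟩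
    apply Subtype.ext
    simp only
    rw [Submodule.comap_map_eq, Submodule.ker_subtype, sup_bot_eq]

lemma my_finrank_map_mkQ_add {V : Type} [AddCommGroup V] [Module F V] [FiniteDimensional F V]
    {L X : Submodule F V} (h : L ≤ X) :
    finrank F (X.map L.mkQ) + finrank F L = finrank F X := by
  have h3 := LinearMap.finrank_range_add_finrank_ker (L.mkQ.comp X.subtype)
  have h1 : LinearMap.range (L.mkQ.comp X.subtype) = X.map L.mkQ := by
    rw [LinearMap.range_comp, Submodule.range_subtype]
  have h2 : LinearMap.ker (L.mkQ.comp X.subtype) = L.comap X.subtype := by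
    rw [LinearMap.ker_comp, Submodule.ker_mkQ]
  rw [h1, h2] at h3
  have h4 : finrank F (L.comap X.subtype) = finrank F L :=
    (Submodule.comapSubtypeEquivOfLe h).finrank_eq
  rw [h4] at h3
  exact h3

/-- superspaces of `L` of rank `d + rank L` vs rank-`d` submodules of `V ⧸ L`. -/
lemma my_quot_equiv {V : Type} [AddCommGroup V] [Module F V] [FiniteDimensional F V]
    (L : Submodule F V) (d : ℕ) :
    Nat.card {Y : Submodule F V // finrank F Y = d + finrank F L ∧ L ≤ Y}
      = Nat.card {W : Submodule F (V ⧸ L) // finrank F W = d} := by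
  apply Nat.card_congr
  have hker : ∀ W : Submodule F (V ⧸ L), L ≤ W.comap L.mkQ := by
    intro W x hx
    have hx0 : L.mkQ x = 0 := by
      rw [← LinearMap.mem_ker, Submodule.ker_mkQ]; exact hx
    simp [Submodule.mem_comap, hx0]
  have hmc : ∀ W : Submodule F (V ⧸ L), (W.comap L.mkQ).map L.mkQ = W := by
    intro W
    rw [Submodule.map_comap_eq, Submodule.range_mkQ, top_inf_eq]
  refine
    { toFun := fun Y => ⟨Y.1.map L.mkQ, ?_⟩
      invFun := fun W => ⟨W.1.comap L.mkQ, ?_, hker W.1⟩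
      left_inv := ?_
      right_inv := ?_ }
  · have := my_finrank_map_mkQ_add (F := F) Y.2.2
    rw [Y.2.1] at this
    omega
  · have := my_finrank_map_mkQ_add (F := F) (hker W.1)
    rw [hmc W.1, W.2] at this
    omega
  · rintro ⟨Y, hY⟩
    apply Subtype.ext
    simp only
    rw [Submodule.comap_map_mkQ, sup_eq_right.mpr hY.2]
  · rintro ⟨W, hW⟩
    apply Subtype.ext
    simp only [hmc W]

/-- uniqueness counts -/
lemma my_count_eq_one_below {V : Type} [AddCommGroup V] [Module F V] [FiniteDimensional F V]
    (X : Submodule F V) {j : ℕ} (hj : finrank F X ≤ j) :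
    Nat.card {T : Submodule F V // finrank F T = j ∧ T ≤ X}
      = if finrank F X = j then 1 else 0 := by
  split_ifs with h
  · rw [Nat.card_eq_one_iff_unique]
    constructor
    · constructor
      intro a b
      apply Subtype.ext
      have ha := Submodule.eq_of_le_of_finrank_eq a.2.2 (by rw [a.2.1, h])
      have hb := Submodule.eq_of_le_of_finrank_eq b.2.2 (by rw [b.2.1, h])
      rw [ha, hb]
    · exact ⟨⟨X, h, le_rfl⟩⟩
  · have : IsEmpty {T : Submodule F V // finrank F T = j ∧ T ≤ X} := by
      constructor
      rintro ⟨T, hT1, hT2⟩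
      have := Submodule.finrank_mono hT2
      omega
    exact Nat.card_of_isEmpty

lemma my_count_eq_one_above {V : Type} [AddCommGroup V] [Module F V] [FiniteDimensional F V]
    (X : Submodule F V) {j : ℕ} (hj : j ≤ finrank F X) :
    Nat.card {U : Submodule F V // finrank F U = j ∧ X ≤ U}
      = if finrank F X = j then 1 else 0 := by
  split_ifs with h
  · rw [Nat.card_eq_one_iff_unique]
    constructor
    · constructor
      intro a b
      apply Subtype.ext
      have ha := Submodule.eq_of_le_of_finrank_eq a.2.2 (by rw [a.2.1, h])
      have hb := Submodule.eq_of_le_of_finrank_eq b.2.2 (by rw [b.2.1, h])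
      rw [← ha, ← hb]
    · exact ⟨⟨X, h, le_rfl⟩⟩
  · have : IsEmpty {U : Submodule F V // finrank F U = j ∧ X ≤ U} := by
      constructor
      rintro ⟨U, hU1, hU2⟩
      have := Submodule.finrank_mono hU2
      omega
    exact Nat.card_of_isEmpty

lemma my_grass_count (d : ℕ) : ∀ (V : Type) [AddCommGroup V] [Module F V] [Finite V],
    d ≤ finrank F V →
    Nat.card {X : Submodule F V // finrank F X = d}
        * ∏ j ∈ Finset.range d, (Fintype.card F ^ (j+1) - 1)
      = ∏ i ∈ Finset.range d, (Fintype.card F ^ (finrank F V - i) - 1) := by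
  induction d with
  | zero =>
    intro V _ _ _ _
    have hfd : FiniteDimensional F V := Module.Finite.of_finite (R := F) (M := V)
    have h1 : Nat.card {X : Submodule F V // finrank F X = 0} = 1 := by
      rw [Nat.card_eq_one_iff_unique]
      refine ⟨⟨fun a b => Subtype.ext ?_⟩, ⟨⊥, finrank_bot F V⟩⟩
      have ha := Submodule.finrank_eq_zero.mp a.2
      have hb := Submodule.finrank_eq_zero.mp b.2
      rw [ha, hb]
    simp [h1]
  | succ d ih =>
    intro V _ _ _ h
    classical
    have hfd : FiniteDimensional F V := Module.Finite.of_finite (R := F) (M := V)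
    have hfin : Finite (Submodule F V) := Finite.of_injective _ SetLike.coe_injective
    have hft : Fintype (Submodule F V) := Fintype.ofFinite _
    set q := Fintype.card F with hq
    set m := finrank F V with hm
    set G1 : Finset (Submodule F V) := univ.filter (fun L => finrank F L = 1) with hG1
    set Gd : Finset (Submodule F V) := univ.filter (fun X => finrank F X = d+1) with hGd
    have dc := my_double_count G1 Gd (fun L X => L ≤ X)
    have perX : ∀ X ∈ Gd, (G1.filter (fun L => L ≤ X)).card * (q - 1) = q^(d+1) - 1 := by
      intro X hX
      rw [hGd, mem_filter] at hX
      have e1 : (G1.filter (fun L => L ≤ X)).card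
          = Nat.card {L : Submodule F V // finrank F L = 1 ∧ L ≤ X} := by
        rw [Nat.card_eq_fintype_card, Fintype.card_subtype, hG1, filter_filter]
      rw [e1, my_sub_equiv X 1]
      have hl := my_lines_count (F := F) ↥X
      rw [hX.2] at hl
      exact hl
    have perL : ∀ L ∈ G1, (Gd.filter (fun X => L ≤ X)).card
        * ∏ j ∈ Finset.range d, (q^(j+1) - 1)
        = ∏ i ∈ Finset.range d, (q^(m - 1 - i) - 1) := by
      intro L hL
      rw [hG1, mem_filter] at hL
      have hfinq : Finite (V ⧸ L) := Finite.of_surjective _ (Submodule.mkQ_surjective L)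
      have hquot : finrank F (V ⧸ L) = m - 1 := by
        have := Submodule.finrank_quotient_add_finrank L
        rw [hL.2] at this
        omega
      have e1 : (Gd.filter (fun X => L ≤ X)).card
          = Nat.card {X : Submodule F V // finrank F X = d + 1 ∧ L ≤ X} := by
        rw [Nat.card_eq_fintype_card, Fintype.card_subtype, hGd, filter_filter]
      have e2 := my_quot_equiv (F := F) L d
      rw [hL.2] at e2
      rw [e1, e2]
      have := ih (V ⧸ L) (by omega)
      rw [hquot] at this
      exact this
    -- combine
    have t1 : (∑ X ∈ Gd, (G1.filter (fun L => L ≤ X)).card) * (q - 1)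
        = Gd.card * (q^(d+1) - 1) := by
      rw [Finset.sum_mul, Finset.sum_congr rfl perX, Finset.sum_const, smul_eq_mul]
    have t2 : (∑ L ∈ G1, (Gd.filter (fun X => L ≤ X)).card) * ∏ j ∈ Finset.range d, (q^(j+1) - 1)
        = G1.card * ∏ i ∈ Finset.range d, (q^(m - 1 - i) - 1) := by
      rw [Finset.sum_mul, Finset.sum_congr rfl perL, Finset.sum_const, smul_eq_mul]
    have t3 : G1.card * (q - 1) = q^m - 1 := by
      have hlv := my_lines_count (F := F) V
      have hc : G1.card = Nat.card {L : Submodule F V // finrank F L = 1} := by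
        rw [Nat.card_eq_fintype_card, Fintype.card_subtype, hG1]
      rw [hc, hlv, ← hm]
    have hcard : Nat.card {X : Submodule F V // finrank F X = d+1} = Gd.card := by
      rw [Nat.card_eq_fintype_card, Fintype.card_subtype, hGd]
    rw [hcard, Finset.prod_range_succ, Finset.prod_range_succ']
    have hre : ∀ i ∈ Finset.range d, (q^(m - (i+1)) - 1) = (q^(m - 1 - i) - 1) := by
      intro i _
      congr 2
      omega
    rw [Finset.prod_congr rfl hre]
    -- goal : #Gd * (Ed * (q^(d+1)-1)) = Pd * (q^(m-0) - 1)
    have expand : Gd.card * ((∏ j ∈ Finset.range d, (q^(j+1) - 1)) * (q^(d+1) - 1))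
        = (∏ i ∈ Finset.range d, (q^(m - 1 - i) - 1)) * (q^(m - 0) - 1) := by
      calc Gd.card * ((∏ j ∈ Finset.range d, (q^(j+1) - 1)) * (q^(d+1) - 1))
          = (Gd.card * (q^(d+1) - 1)) * ∏ j ∈ Finset.range d, (q^(j+1) - 1) := by ring
        _ = ((∑ X ∈ Gd, (G1.filter (fun L => L ≤ X)).card) * (q - 1))
              * ∏ j ∈ Finset.range d, (q^(j+1) - 1) := by rw [t1]
        _ = ((∑ L ∈ G1, (Gd.filter (fun X => L ≤ X)).card)
              * ∏ j ∈ Finset.range d, (q^(j+1) - 1)) * (q - 1) := by rw [← dc]; ring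
        _ = (G1.card * ∏ i ∈ Finset.range d, (q^(m - 1 - i) - 1)) * (q - 1) := by rw [t2]
        _ = (G1.card * (q - 1)) * ∏ i ∈ Finset.range d, (q^(m - 1 - i) - 1) := by ring
        _ = (q^m - 1) * ∏ i ∈ Finset.range d, (q^(m - 1 - i) - 1) := by rw [t3]
        _ = (∏ i ∈ Finset.range d, (q^(m - 1 - i) - 1)) * (q^(m - 0) - 1) := by
              rw [Nat.sub_zero]; ring
    exact expand

/-- count of `j`-dim subspaces contained in a fixed `X`, in the ambient lattice. -/
lemma my_countA {V : Type} [AddCommGroup V] [Module F V] [Finite V]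
    [Fintype (Submodule F V)] (X : Submodule F V) (j : ℕ) (hj : j ≤ finrank F X)
    [DecidablePred fun T : Submodule F V => finrank F T = j ∧ T ≤ X] :
    (univ.filter (fun T : Submodule F V => finrank F T = j ∧ T ≤ X)).card
        * ∏ l ∈ Finset.range j, (Fintype.card F ^ (l+1) - 1)
      = ∏ i ∈ Finset.range j, (Fintype.card F ^ (finrank F X - i) - 1) := by
  classical
  have e1 : (univ.filter (fun T : Submodule F V => finrank F T = j ∧ T ≤ X)).card
      = Nat.card {T : Submodule F V // finrank F T = j ∧ T ≤ X} := by
    rw [Nat.card_eq_fintype_card]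
    exact (Fintype.card_subtype _).symm
  rw [e1, my_sub_equiv X j, my_grass_count j ↥X hj]

/-- count of `(d + rank L)`-dim subspaces containing a fixed `L`. -/
lemma my_countB {V : Type} [AddCommGroup V] [Module F V] [Finite V]
    [Fintype (Submodule F V)] (L : Submodule F V) (d e : ℕ)
    (he : e = d + finrank F L) (hd : d ≤ finrank F V - finrank F L)
    [DecidablePred fun Y : Submodule F V => finrank F Y = e ∧ L ≤ Y] :
    (univ.filter (fun Y : Submodule F V => finrank F Y = e ∧ L ≤ Y)).card
        * ∏ l ∈ Finset.range d, (Fintype.card F ^ (l+1) - 1)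
      = ∏ i ∈ Finset.range d, (Fintype.card F ^ (finrank F V - finrank F L - i) - 1) := by
  classical
  have hfd : FiniteDimensional F V := Module.Finite.of_finite (R := F) (M := V)
  have e1 : (univ.filter (fun Y : Submodule F V => finrank F Y = e ∧ L ≤ Y)).card
      = Nat.card {Y : Submodule F V // finrank F Y = e ∧ L ≤ Y} := by
    rw [Nat.card_eq_fintype_card]
    exact (Fintype.card_subtype _).symm
  have hfinq : Finite (V ⧸ L) := Finite.of_surjective _ (Submodule.mkQ_surjective L)
  have hquot : finrank F (V ⧸ L) = finrank F V - finrank F L := by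
    have := Submodule.finrank_quotient_add_finrank L
    omega
  subst he
  rw [e1, my_quot_equiv L d]
  have := my_grass_count (F := F) d (V ⧸ L) (by rw [hquot]; exact hd)
  rwa [hquot] at this

lemma my_exists_superspace {V : Type} [AddCommGroup V] [Module F V] [FiniteDimensional F V]
    (W : Submodule F V) (h : finrank F W < finrank F V) :
    ∃ X : Submodule F V, W ≤ X ∧ finrank F X = finrank F W + 1 := by
  have hW : W < ⊤ := by
    rcases lt_or_eq_of_le (le_top (a := W)) with h' | h'
    · exact h'
    · rw [h', finrank_top] at h; omega
  obtain ⟨-, x, -, hx⟩ := SetLike.lt_iff_le_and_exists.mp hW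
  have hx0 : x ≠ 0 := fun h0 => hx (h0 ▸ W.zero_mem)
  refine ⟨W ⊔ Submodule.span F {x}, le_sup_left, ?_⟩
  have hinf : W ⊓ Submodule.span F {x} = ⊥ := by
    rw [eq_bot_iff]
    rintro y ⟨hyW, hys⟩
    obtain ⟨c, rfl⟩ := Submodule.mem_span_singleton.mp hys
    rcases eq_or_ne c 0 with rfl | hc
    · simp
    · exfalso
      exact hx (by simpa [smul_smul, inv_mul_cancel₀ hc] using W.smul_mem c⁻¹ hyW)
  have := Submodule.finrank_sup_add_finrank_inf_eq W (Submodule.span F {x})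
  rw [hinf, finrank_span_singleton hx0] at this
  simp only [finrank_bot] at this
  omega

end AuxCounting

open Module

/-- The Gaussian binomial coefficient `[n, k]_q`, as a rational number. -/
noncomputable def gaussBinom (q n k : ℕ) : ℚ :=
  ∏ i ∈ Finset.range k, (((q : ℚ) ^ (n - i) - 1) / ((q : ℚ) ^ (k - i) - 1))

section MainAux
variable {F : Type} [Field F] [Fintype F]

lemma my_refl0 {q : ℕ} (t : ℕ) :
    ∏ i ∈ Finset.range t, (q ^ (t - i) - 1) = ∏ j ∈ Finset.range t, (q ^ (j+1) - 1) := by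
  have := Finset.prod_range_reflect (fun j => q ^ (j+1) - 1) t
  rw [← this]
  apply Finset.prod_congr rfl
  intro i hi
  rw [Finset.mem_range] at hi
  congr 2
  omega


end MainAux

set_option maxHeartbeats 2000000 in
/-- The q-analog of de Caen's bound. -/
theorem deCaen_bound (q n k : ℕ) (hq : IsPrimePow q)
    (hk : 2 ≤ k) (hkn : k ≤ n - 1)
    (F : Type) [Field F] [Fintype F] (hF : Fintype.card F = q) :
    (coveringNumber F n k (k - 1) : ℚ) ≥
      (((q : ℚ) ^ k - 1) * ((q : ℚ) - 1) / ((q : ℚ) ^ (n - k) - 1) ^ 2) *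
        gaussBinom q n (k + 1) := by
  subst hF
  classical
  set q := Fintype.card F with hqdef
  have hq2 : 2 ≤ q := hq.two_le
  have hrankV : finrank F (Fin n → F) = n := by
    simp [Module.finrank_fin_fun]
  have hn : 1 ≤ n := by
    by_contra hcon
    simp only [not_le, Nat.lt_one_iff] at hcon
    subst hcon
    omega
  have hkn' : k + 1 ≤ n := by omega
  have hfinV : Finite (Fin n → F) := inferInstance
  have hfinSub : Finite (Submodule F (Fin n → F)) :=
    Finite.of_injective _ SetLike.coe_injective
  have hftSub : Fintype (Submodule F (Fin n → F)) := Fintype.ofFinite _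
  -- nonemptiness of the covering family set
  have hne : { m : ℕ | ∃ S : Finset (Submodule F (Fin n → F)),
      S.card = m ∧
      (∀ X ∈ S, finrank F X = k) ∧
      (∀ Y : Submodule F (Fin n → F), finrank F Y = k - 1 → ∃ X ∈ S, Y ≤ X) }.Nonempty := by
    refine ⟨(univ.filter (fun X : Submodule F (Fin n → F) => finrank F X = k)).card,
      univ.filter (fun X => finrank F X = k), rfl, ?_, ?_⟩
    · intro X hX; exact (mem_filter.mp hX).2
    · intro Y hY
      obtain ⟨X, hYX, hX⟩ := my_exists_superspace (F := F) Y (by rw [hY, hrankV]; omega)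
      refine ⟨X, mem_filter.mpr ⟨mem_univ _, ?_⟩, hYX⟩
      rw [hX, hY]; omega
  obtain ⟨S, hScard, hSrank, hScover⟩ := Nat.sInf_mem hne
  rw [ge_iff_le, show coveringNumber F n k (k-1) = sInf { m : ℕ | ∃ S : Finset (Submodule F (Fin n → F)),
      S.card = m ∧
      (∀ X ∈ S, finrank F X = k) ∧
      (∀ Y : Submodule F (Fin n → F), finrank F Y = k - 1 → ∃ X ∈ S, Y ≤ X) } from rfl,
    ← hScard]
  -- Grassmannians
  set Gm : Finset (Submodule F (Fin n → F)) :=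
    univ.filter (fun T => finrank F T = k - 1) with hGm
  set Gp : Finset (Submodule F (Fin n → F)) :=
    univ.filter (fun U => finrank F U = k + 1) with hGp
  set dd : Submodule F (Fin n → F) → ℕ := fun T => (S.filter (fun B => T ≤ B)).card with hdd
  set bb : Submodule F (Fin n → F) → ℕ := fun U => (S.filter (fun B => B ≤ U)).card with hbb
  -- H1
  have H1 : (∑ T ∈ Gm, dd T) * ∏ l ∈ Finset.range (k-1), (q ^ (l+1) - 1)
      = S.card * ∏ i ∈ Finset.range (k-1), (q ^ (k - i) - 1) := by
    have dc := my_double_count Gm S (fun T B => T ≤ B)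
    rw [hdd]
    simp only []
    rw [dc, Finset.sum_mul]
    rw [Finset.sum_congr rfl (fun B hB => ?_), Finset.sum_const, smul_eq_mul]
    have hBr : finrank F B = k := hSrank B hB
    have := my_countA (F := F) B (k-1) (by rw [hBr]; omega)
    rw [hGm, filter_filter]
    rw [this, hBr]
  -- H2
  have H2 : (∑ U ∈ Gp, bb U) * (q - 1) = S.card * (q ^ (n-k) - 1) := by
    have dc := my_double_count Gp S (fun U B => B ≤ U)
    rw [hbb]
    simp only []
    rw [dc, Finset.sum_mul]
    rw [Finset.sum_congr rfl (fun B hB => ?_), Finset.sum_const, smul_eq_mul]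
    have hBr : finrank F B = k := hSrank B hB
    have := my_countB (F := F) B 1 (k+1) (by rw [hBr]; omega) (by rw [hrankV, hBr]; omega)
    rw [hGp, filter_filter]
    have e2 : ∏ l ∈ Finset.range 1, (q ^ (l+1) - 1) = q - 1 := by simp
    have e3 : ∏ i ∈ Finset.range 1, (q ^ (finrank F (Fin n → F) - finrank F B - i) - 1)
        = q ^ (n - k) - 1 := by
      rw [Finset.prod_range_one, hrankV, hBr, Nat.sub_zero]
    rw [e2, e3] at this
    exact this
  -- pair facts
  have pairfacts : ∀ x ∈ S.offDiag,
      finrank F ↥(x.1 ⊓ x.2) ≤ k - 1 ∧ finrank F ↥(x.1 ⊔ x.2) + finrank F ↥(x.1 ⊓ x.2) = k + k := by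
    rintro ⟨B, B'⟩ hx
    dsimp only
    rw [Finset.mem_offDiag] at hx
    obtain ⟨hB, hB', hBne⟩ := hx
    have h1 : finrank F B = k := hSrank _ hB
    have h2 : finrank F B' = k := hSrank _ hB'
    have hsum := Submodule.finrank_sup_add_finrank_inf_eq B B'
    rw [h1, h2] at hsum
    have hle : finrank F ↥(B ⊓ B') ≤ k := by
      have := Submodule.finrank_mono (inf_le_left : B ⊓ B' ≤ B)
      omega
    have hneq : finrank F ↥(B ⊓ B') ≠ k := by
      intro hEq
      have e1 : B ⊓ B' = B := Submodule.eq_of_le_of_finrank_eq inf_le_left (by rw [hEq, h1])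
      have e2 : B ⊓ B' = B' := Submodule.eq_of_le_of_finrank_eq inf_le_right (by rw [hEq, h2])
      exact hBne (by rw [← e1, e2])
    exact ⟨by omega, hsum⟩
  -- H3
  have offd_le : ∀ T : Submodule F (Fin n → F),
      (S.filter (fun B => T ≤ B)).offDiag
        = S.offDiag.filter (fun x => T ≤ x.1 ∧ T ≤ x.2) := by
    intro T
    ext ⟨a, c⟩
    simp only [Finset.mem_offDiag, Finset.mem_filter]
    tauto
  have offd_ge : ∀ U : Submodule F (Fin n → F),
      (S.filter (fun B => B ≤ U)).offDiag
        = S.offDiag.filter (fun x => x.1 ≤ U ∧ x.2 ≤ U) := by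
    intro U
    ext ⟨a, c⟩
    simp only [Finset.mem_offDiag, Finset.mem_filter]
    tauto
  have cardconv : ∀ (p : Submodule F (Fin n → F) → Prop) (hp : DecidablePred p),
      (@Finset.filter _ p hp univ).card = Nat.card {X : Submodule F (Fin n → F) // p X} := by
    intro p hp
    rw [Nat.card_eq_fintype_card]
    convert (Fintype.card_subtype p).symm
  have H3 : ∑ T ∈ Gm, (S.filter (fun B => T ≤ B)).offDiag.card
      = ∑ U ∈ Gp, (S.filter (fun B => B ≤ U)).offDiag.card := by
    have l1 : ∑ T ∈ Gm, (S.filter (fun B => T ≤ B)).offDiag.card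
        = ∑ x ∈ S.offDiag, (Gm.filter (fun T => T ≤ x.1 ∧ T ≤ x.2)).card := by
      rw [Finset.sum_congr rfl (fun T _ => by rw [offd_le T])]
      exact my_double_count Gm S.offDiag (fun T x => T ≤ x.1 ∧ T ≤ x.2)
    have l2 : ∑ U ∈ Gp, (S.filter (fun B => B ≤ U)).offDiag.card
        = ∑ x ∈ S.offDiag, (Gp.filter (fun U => x.1 ≤ U ∧ x.2 ≤ U)).card := by
      rw [Finset.sum_congr rfl (fun U _ => by rw [offd_ge U])]
      exact my_double_count Gp S.offDiag (fun U x => x.1 ≤ U ∧ x.2 ≤ U)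
    rw [l1, l2]
    apply Finset.sum_congr rfl
    intro x hx
    obtain ⟨hinfle, hsum⟩ := pairfacts x hx
    have c1 : (Gm.filter (fun T => T ≤ x.1 ∧ T ≤ x.2)).card
        = if finrank F ↥(x.1 ⊓ x.2) = k - 1 then 1 else 0 := by
      have e : (Gm.filter (fun T => T ≤ x.1 ∧ T ≤ x.2))
          = univ.filter (fun T : Submodule F (Fin n → F) => finrank F T = k - 1 ∧ T ≤ x.1 ⊓ x.2) := by
        rw [hGm, filter_filter]
        apply Finset.filter_congr
        intro T _
        simp [le_inf_iff]
      rw [e, cardconv _ _]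
      exact my_count_eq_one_below _ hinfle
    have c2 : (Gp.filter (fun U => x.1 ≤ U ∧ x.2 ≤ U)).card
        = if finrank F ↥(x.1 ⊔ x.2) = k + 1 then 1 else 0 := by
      have e : (Gp.filter (fun U => x.1 ≤ U ∧ x.2 ≤ U))
          = univ.filter (fun U : Submodule F (Fin n → F) => finrank F U = k + 1 ∧ x.1 ⊔ x.2 ≤ U) := by
        rw [hGp, filter_filter]
        apply Finset.filter_congr
        intro U _
        simp [sup_le_iff]
      rw [e, cardconv _ _]
      exact my_count_eq_one_above _ (by omega)
    rw [c1, c2]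
    split_ifs with p1 p2 p2
    · rfl
    · omega
    · omega
    · rfl
  -- H4, H5
  have H5 : ∀ T ∈ Gm, 1 ≤ dd T := by
    intro T hT
    rw [hGm, mem_filter] at hT
    obtain ⟨X, hXS, hTX⟩ := hScover T hT.2
    rw [hdd]
    simp only []
    rw [Nat.succ_le_iff, Finset.card_pos]
    exact ⟨X, mem_filter.mpr ⟨hXS, hTX⟩⟩
  have H4 : ∀ T ∈ Gm, dd T * (q - 1) ≤ q ^ (n - k + 1) - 1 := by
    intro T hT
    rw [hGm, mem_filter] at hT
    have hsub : S.filter (fun B => T ≤ B)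
        ⊆ univ.filter (fun X : Submodule F (Fin n → F) => finrank F X = k ∧ T ≤ X) := by
      intro B hB
      rw [mem_filter] at hB ⊢
      exact ⟨mem_univ _, hSrank _ hB.1, hB.2⟩
    have hcle := Finset.card_le_card hsub
    have hcnt := my_countB (F := F) T 1 k (by rw [hT.2]; omega) (by rw [hrankV, hT.2]; omega)
    rw [Finset.prod_range_one, Finset.prod_range_one, hrankV, hT.2, pow_one, Nat.sub_zero]
      at hcnt
    have he : n - (k - 1) = n - k + 1 := by omega
    rw [he] at hcnt
    calc dd T * (q-1)
        ≤ (univ.filter (fun X : Submodule F (Fin n → F) => finrank F X = k ∧ T ≤ X)).card * (q-1) :=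
          Nat.mul_le_mul_right _ hcle
      _ = q ^ (n-k+1) - 1 := hcnt
  -- H6
  have H6m : Gm.card * ∏ l ∈ Finset.range (k-1), (q^(l+1) - 1)
      = ∏ i ∈ Finset.range (k-1), (q^(n-i) - 1) := by
    rw [hGm, cardconv _ _]
    have := my_grass_count (F := F) (k-1) (Fin n → F) (by rw [hrankV]; omega)
    rwa [hrankV] at this
  have H6p : Gp.card * ∏ l ∈ Finset.range (k+1), (q^(l+1) - 1)
      = ∏ i ∈ Finset.range (k+1), (q^(n-i) - 1) := by
    rw [hGp, cardconv _ _]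
    have := my_grass_count (F := F) (k+1) (Fin n → F) (by rw [hrankV]; omega)
    rwa [hrankV] at this
  -- ℕ product identities
  have Esplit : ∏ l ∈ Finset.range (k+1), (q^(l+1) - 1)
      = (∏ l ∈ Finset.range (k-1), (q^(l+1) - 1)) * ((q^k - 1) * (q^(k+1) - 1)) := by
    have e1 : Finset.range (k+1) = Finset.range ((k-1)+1+1) := by congr 1; omega
    rw [e1, Finset.prod_range_succ, Finset.prod_range_succ]
    rw [show k-1+1+1 = k+1 by omega, show k-1+1 = k by omega]
    ring
  have Pnsplit : ∏ i ∈ Finset.range (k+1), (q^(n-i) - 1)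
      = (∏ i ∈ Finset.range (k-1), (q^(n-i) - 1)) * ((q^(n-k+1) - 1) * (q^(n-k) - 1)) := by
    have e1 : Finset.range (k+1) = Finset.range ((k-1)+1+1) := by congr 1; omega
    rw [e1, Finset.prod_range_succ, Finset.prod_range_succ]
    rw [show n - (k-1+1) = n - k by omega, show n - (k-1) = n - k + 1 by omega]
    ring
  have PkErel : (∏ i ∈ Finset.range (k-1), (q^(k-i) - 1)) * (q - 1)
      = (q^k - 1) * ∏ l ∈ Finset.range (k-1), (q^(l+1) - 1) := by
    have e0 := my_refl0 (q := q) k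
    have e1 : Finset.range k = Finset.range ((k-1)+1) := by congr 1; omega
    rw [e1, Finset.prod_range_succ, Finset.prod_range_succ] at e0
    rw [show k - (k-1) = 1 by omega, show k-1+1 = k by omega, pow_one] at e0
    rw [e0]
    ring
  -- casts
  have h2Q : (2:ℚ) ≤ (q:ℚ) := by exact_mod_cast hq2
  have h1Q : (1:ℚ) < (q:ℚ) := by linarith
  have hcast : ∀ j : ℕ, ((q ^ j - 1 : ℕ) : ℚ) = (q:ℚ) ^ j - 1 := by
    intro j
    rw [Nat.cast_sub (Nat.one_le_pow _ _ (by omega))]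
    push_cast
    ring
  have hcprod : ∀ (t : ℕ) (f : ℕ → ℕ),
      ((∏ i ∈ Finset.range t, (q ^ f i - 1) : ℕ) : ℚ)
        = ∏ i ∈ Finset.range t, ((q:ℚ) ^ f i - 1) := by
    intro t f
    rw [Nat.cast_prod]
    exact Finset.prod_congr rfl (fun i _ => hcast (f i))
  have hpowpos : ∀ j : ℕ, 1 ≤ j → (0:ℚ) < (q:ℚ)^j - 1 := by
    intro j hj
    have : (1:ℚ) < (q:ℚ)^j := one_lt_pow₀ h1Q (by omega)
    linarith
  have hc1 : ((q - 1 : ℕ) : ℚ) = (q:ℚ) - 1 := by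
    rw [Nat.cast_sub (by omega : 1 ≤ q)]
    simp
  have hx1 : (0:ℚ) < (q:ℚ) - 1 := by linarith
  have hxk : (0:ℚ) < (q:ℚ)^k - 1 := hpowpos k (by omega)
  have hxk1 : (0:ℚ) < (q:ℚ)^(k+1) - 1 := hpowpos (k+1) (by omega)
  have hxnk : (0:ℚ) < (q:ℚ)^(n-k) - 1 := hpowpos (n-k) (by omega)
  have hxnk1 : (0:ℚ) < (q:ℚ)^(n-k+1) - 1 := hpowpos (n-k+1) (by omega)
  have hEmpos : (0:ℚ) < ∏ l ∈ Finset.range (k-1), ((q:ℚ)^(l+1) - 1) :=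
    Finset.prod_pos (fun i _ => hpowpos (i+1) (by omega))
  -- q1
  have q1 : (∑ T ∈ Gm, (dd T:ℚ)) * ((q:ℚ) - 1) = (S.card:ℚ) * ((q:ℚ)^k - 1) := by
    have c := congrArg (fun z : ℕ => (z:ℚ)) H1
    simp only [Nat.cast_mul, Nat.cast_sum] at c
    rw [hcprod (k-1) (fun l => l+1), hcprod (k-1) (fun i => k - i)] at c
    have c2 := congrArg (fun z : ℕ => (z:ℚ)) PkErel
    simp only [Nat.cast_mul] at c2
    rw [hcprod (k-1) (fun i => k - i), hc1, hcast k, hcprod (k-1) (fun l => l+1)] at c2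
    apply mul_right_cancel₀ (ne_of_gt hEmpos)
    calc (∑ T ∈ Gm, (dd T:ℚ)) * ((q:ℚ) - 1) * ∏ l ∈ Finset.range (k-1), ((q:ℚ)^(l+1) - 1)
        = ((∑ T ∈ Gm, (dd T:ℚ)) * ∏ l ∈ Finset.range (k-1), ((q:ℚ)^(l+1) - 1)) * ((q:ℚ)-1) := by
          ring
      _ = ((S.card:ℚ) * ∏ i ∈ Finset.range (k-1), ((q:ℚ)^(k-i) - 1)) * ((q:ℚ)-1) := by rw [c]
      _ = (S.card:ℚ) * ((∏ i ∈ Finset.range (k-1), ((q:ℚ)^(k-i) - 1)) * ((q:ℚ)-1)) := by ring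
      _ = (S.card:ℚ) * (((q:ℚ)^k - 1) * ∏ l ∈ Finset.range (k-1), ((q:ℚ)^(l+1) - 1)) := by
          rw [c2]
      _ = (S.card:ℚ) * ((q:ℚ)^k - 1) * ∏ l ∈ Finset.range (k-1), ((q:ℚ)^(l+1) - 1) := by ring
  -- q2
  have q2 : (∑ U ∈ Gp, (bb U:ℚ)) * ((q:ℚ) - 1) = (S.card:ℚ) * ((q:ℚ)^(n-k) - 1) := by
    have c := congrArg (fun z : ℕ => (z:ℚ)) H2
    simp only [Nat.cast_mul, Nat.cast_sum] at c
    rw [hc1, hcast (n-k)] at c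
    exact c
  -- q3
  have sqle : ∀ a : ℕ, a ≤ a * a := by
    intro a
    cases a with
    | zero => simp
    | succ b => exact Nat.le_mul_of_pos_left _ (Nat.succ_pos b)
  have eT : ∀ T : Submodule F (Fin n → F),
      (((S.filter (fun B => T ≤ B)).offDiag.card : ℕ) : ℚ) = (dd T:ℚ)^2 - (dd T:ℚ) := by
    intro T
    rw [Finset.offDiag_card, Nat.cast_sub (sqle _)]
    have : dd T = (S.filter (fun B => T ≤ B)).card := rfl
    rw [← this]
    push_cast
    ring
  have eU : ∀ U : Submodule F (Fin n → F),
      (((S.filter (fun B => B ≤ U)).offDiag.card : ℕ) : ℚ) = (bb U:ℚ)^2 - (bb U:ℚ) := by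
    intro U
    rw [Finset.offDiag_card, Nat.cast_sub (sqle _)]
    have : bb U = (S.filter (fun B => B ≤ U)).card := rfl
    rw [← this]
    push_cast
    ring
  have q3 : ∑ T ∈ Gm, ((dd T:ℚ)^2 - (dd T:ℚ)) = ∑ U ∈ Gp, ((bb U:ℚ)^2 - (bb U:ℚ)) := by
    have c := congrArg (fun z : ℕ => (z:ℚ)) H3
    simp only [Nat.cast_sum] at c
    rw [Finset.sum_congr rfl (fun T _ => eT T), Finset.sum_congr rfl (fun U _ => eU U)] at c
    exact c
  -- q4
  have q4 : (∑ T ∈ Gm, ((dd T:ℚ)^2 - (dd T:ℚ))) * ((q:ℚ) - 1)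
      ≤ ((q:ℚ)^(n-k+1) - 1) * ((∑ T ∈ Gm, (dd T:ℚ)) - (Gm.card:ℚ)) := by
    have perT : ∀ T ∈ Gm, ((dd T:ℚ)^2 - (dd T:ℚ)) * ((q:ℚ) - 1)
        ≤ ((q:ℚ)^(n-k+1) - 1) * ((dd T:ℚ) - 1) := by
      intro T hT
      have h4 := H4 T hT
      have h5 := H5 T hT
      have h4' : (dd T : ℚ) * ((q:ℚ) - 1) ≤ (q:ℚ)^(n-k+1) - 1 := by
        have c := (Nat.cast_le (α := ℚ)).mpr h4
        rw [Nat.cast_mul, hc1, hcast (n-k+1)] at c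
        exact c
      have h5' : (1:ℚ) ≤ (dd T : ℚ) := by exact_mod_cast h5
      nlinarith [h4', h5']
    calc (∑ T ∈ Gm, ((dd T:ℚ)^2 - (dd T:ℚ))) * ((q:ℚ) - 1)
        = ∑ T ∈ Gm, ((dd T:ℚ)^2 - (dd T:ℚ)) * ((q:ℚ) - 1) := by rw [Finset.sum_mul]
      _ ≤ ∑ T ∈ Gm, ((q:ℚ)^(n-k+1) - 1) * ((dd T:ℚ) - 1) := Finset.sum_le_sum perT
      _ = ((q:ℚ)^(n-k+1) - 1) * ((∑ T ∈ Gm, (dd T:ℚ)) - (Gm.card:ℚ)) := by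
          rw [← Finset.mul_sum, Finset.sum_sub_distrib, Finset.sum_const, nsmul_eq_mul, mul_one]
  -- q5 (Cauchy-Schwarz)
  have q5 : (∑ U ∈ Gp, (bb U:ℚ))^2 ≤ (Gp.card:ℚ) * ∑ U ∈ Gp, (bb U:ℚ)^2 := by
    have c := Finset.sum_mul_sq_le_sq_mul_sq Gp (fun _ => (1:ℚ)) (fun U => (bb U:ℚ))
    simp only [one_mul, one_pow, Finset.sum_const, nsmul_eq_mul, mul_one] at c
    exact c
  -- q6
  have q6 : (Gm.card:ℚ) * (((q:ℚ)^(n-k+1) - 1) * ((q:ℚ)^(n-k) - 1))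
      = (Gp.card:ℚ) * (((q:ℚ)^k - 1) * ((q:ℚ)^(k+1) - 1)) := by
    have c6m := congrArg (fun z : ℕ => (z:ℚ)) H6m
    simp only [Nat.cast_mul] at c6m
    rw [hcprod (k-1) (fun l => l+1), hcprod (k-1) (fun i => n - i)] at c6m
    have c6p := congrArg (fun z : ℕ => (z:ℚ)) H6p
    simp only [Nat.cast_mul] at c6p
    rw [hcprod (k+1) (fun l => l+1), hcprod (k+1) (fun i => n - i)] at c6p
    have cEs := congrArg (fun z : ℕ => (z:ℚ)) Esplit
    simp only [Nat.cast_mul] at cEs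
    rw [hcprod (k+1) (fun l => l+1), hcprod (k-1) (fun l => l+1), hcast k, hcast (k+1)] at cEs
    have cPs := congrArg (fun z : ℕ => (z:ℚ)) Pnsplit
    simp only [Nat.cast_mul] at cPs
    rw [hcprod (k+1) (fun i => n - i), hcprod (k-1) (fun i => n - i), hcast (n-k+1),
      hcast (n-k)] at cPs
    apply mul_right_cancel₀ (ne_of_gt hEmpos)
    calc (Gm.card:ℚ) * (((q:ℚ)^(n-k+1) - 1) * ((q:ℚ)^(n-k) - 1))
          * ∏ l ∈ Finset.range (k-1), ((q:ℚ)^(l+1) - 1)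
        = ((Gm.card:ℚ) * ∏ l ∈ Finset.range (k-1), ((q:ℚ)^(l+1) - 1))
            * (((q:ℚ)^(n-k+1) - 1) * ((q:ℚ)^(n-k) - 1)) := by ring
      _ = (∏ i ∈ Finset.range (k-1), ((q:ℚ)^(n-i) - 1))
            * (((q:ℚ)^(n-k+1) - 1) * ((q:ℚ)^(n-k) - 1)) := by rw [c6m]
      _ = ∏ i ∈ Finset.range (k+1), ((q:ℚ)^(n-i) - 1) := by rw [cPs]
      _ = (Gp.card:ℚ) * ∏ l ∈ Finset.range (k+1), ((q:ℚ)^(l+1) - 1) := by rw [c6p]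
      _ = (Gp.card:ℚ) * ((∏ l ∈ Finset.range (k-1), ((q:ℚ)^(l+1) - 1))
            * (((q:ℚ)^k - 1) * ((q:ℚ)^(k+1) - 1))) := by rw [cEs]
      _ = (Gp.card:ℚ) * (((q:ℚ)^k - 1) * ((q:ℚ)^(k+1) - 1))
            * ∏ l ∈ Finset.range (k-1), ((q:ℚ)^(l+1) - 1) := by ring
  -- q7 : gaussBinom equals Gp.card
  have hEppos : (0:ℚ) < ∏ l ∈ Finset.range (k+1), ((q:ℚ)^(l+1) - 1) :=
    Finset.prod_pos (fun i _ => hpowpos (i+1) (by omega))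
  have q7 : gaussBinom q n (k+1) = (Gp.card:ℚ) := by
    have cDen : ∏ i ∈ Finset.range (k+1), ((q:ℚ)^(k+1-i) - 1)
        = ∏ l ∈ Finset.range (k+1), ((q:ℚ)^(l+1) - 1) := by
      have c : ((∏ i ∈ Finset.range (k+1), (q ^ (k+1-i) - 1) : ℕ) : ℚ)
          = ((∏ l ∈ Finset.range (k+1), (q ^ (l+1) - 1) : ℕ) : ℚ) :=
        Nat.cast_inj.mpr (my_refl0 (q := q) (k+1))
      rw [hcprod (k+1) (fun i => k+1-i), hcprod (k+1) (fun l => l+1)] at c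
      exact c
    have c6p := congrArg (fun z : ℕ => (z:ℚ)) H6p
    simp only [Nat.cast_mul] at c6p
    rw [hcprod (k+1) (fun l => l+1), hcprod (k+1) (fun i => n - i)] at c6p
    rw [gaussBinom, Finset.prod_div_distrib, cDen, eq_comm, eq_div_iff (ne_of_gt hEppos)]
    exact c6p
  -- final algebra
  rw [q7, div_mul_eq_mul_div, div_le_iff₀ (by positivity : (0:ℚ) < ((q:ℚ)^(n-k) - 1)^2)]
  -- goal : (q^k-1)*(q-1)*Gp.card ≤ S.card * ((q^(n-k)-1))^2
  have hG0 : (0:ℚ) ≤ (Gp.card:ℚ) := Nat.cast_nonneg _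
  have step1 : (∑ U ∈ Gp, (bb U:ℚ))^2
      ≤ (Gp.card:ℚ) * ((∑ T ∈ Gm, ((dd T:ℚ)^2 - (dd T:ℚ))) + ∑ U ∈ Gp, (bb U:ℚ)) := by
    have e : ∑ U ∈ Gp, (bb U:ℚ)^2
        = (∑ T ∈ Gm, ((dd T:ℚ)^2 - (dd T:ℚ))) + ∑ U ∈ Gp, (bb U:ℚ) := by
      rw [q3, Finset.sum_sub_distrib]
      ring
    rw [← e]
    exact q5
  have step2 : (∑ U ∈ Gp, (bb U:ℚ))^2 * ((q:ℚ)-1)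
      ≤ (Gp.card:ℚ) * (((q:ℚ)^(n-k+1) - 1) * ((∑ T ∈ Gm, (dd T:ℚ)) - (Gm.card:ℚ))
          + (∑ U ∈ Gp, (bb U:ℚ)) * ((q:ℚ)-1)) := by
    have a1 := mul_le_mul_of_nonneg_right step1 hx1.le
    have a2 := mul_le_mul_of_nonneg_left q4 hG0
    nlinarith [a1, a2]
  have R1 : ((S.card:ℚ) * ((q:ℚ)^(n-k) - 1))^2
      ≤ (Gp.card:ℚ) * ((q:ℚ)^(n-k+1) - 1) * ((S.card:ℚ) * ((q:ℚ)^k - 1))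
        - (Gp.card:ℚ) * ((q:ℚ)^(n-k+1) - 1) * (Gm.card:ℚ) * ((q:ℚ)-1)
        + (Gp.card:ℚ) * ((S.card:ℚ) * ((q:ℚ)^(n-k) - 1)) * ((q:ℚ)-1) := by
    calc ((S.card:ℚ) * ((q:ℚ)^(n-k) - 1))^2
        = ((∑ U ∈ Gp, (bb U:ℚ)) * ((q:ℚ)-1))^2 := by rw [q2]
      _ = ((∑ U ∈ Gp, (bb U:ℚ))^2 * ((q:ℚ)-1)) * ((q:ℚ)-1) := by ring
      _ ≤ ((Gp.card:ℚ) * (((q:ℚ)^(n-k+1) - 1) * ((∑ T ∈ Gm, (dd T:ℚ)) - (Gm.card:ℚ))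
            + (∑ U ∈ Gp, (bb U:ℚ)) * ((q:ℚ)-1))) * ((q:ℚ)-1) :=
          mul_le_mul_of_nonneg_right step2 hx1.le
      _ = (Gp.card:ℚ) * ((q:ℚ)^(n-k+1) - 1) * ((∑ T ∈ Gm, (dd T:ℚ)) * ((q:ℚ)-1))
            - (Gp.card:ℚ) * ((q:ℚ)^(n-k+1) - 1) * (Gm.card:ℚ) * ((q:ℚ)-1)
            + (Gp.card:ℚ) * ((∑ U ∈ Gp, (bb U:ℚ)) * ((q:ℚ)-1)) * ((q:ℚ)-1) := by ring
      _ = (Gp.card:ℚ) * ((q:ℚ)^(n-k+1) - 1) * ((S.card:ℚ) * ((q:ℚ)^k - 1))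
            - (Gp.card:ℚ) * ((q:ℚ)^(n-k+1) - 1) * (Gm.card:ℚ) * ((q:ℚ)-1)
            + (Gp.card:ℚ) * ((S.card:ℚ) * ((q:ℚ)^(n-k) - 1)) * ((q:ℚ)-1) := by rw [q1, q2]
  have pf1 : (q:ℚ)^(n-k+1) = (q:ℚ)^(n-k) * q := pow_succ _ _
  have pf2 : (q:ℚ)^(k+1) = (q:ℚ)^k * q := pow_succ _ _
  have idI : ((q:ℚ)^(n-k+1) - 1)*((q:ℚ)^k - 1) + ((q:ℚ)^(n-k) - 1)*((q:ℚ) - 1)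
      = ((q:ℚ)^(k+1) - 1)*((q:ℚ)^(n-k) - 1) + ((q:ℚ)^k - 1)*((q:ℚ) - 1) := by
    rw [pf1, pf2]
    ring
  have R3 : ((S.card:ℚ) * ((q:ℚ)^(n-k) - 1))^2 * ((q:ℚ)^(n-k) - 1)
      ≤ (Gp.card:ℚ) * (S.card:ℚ) * ((q:ℚ)^(n-k) - 1)
          * (((q:ℚ)^(k+1) - 1)*((q:ℚ)^(n-k) - 1) + ((q:ℚ)^k - 1)*((q:ℚ) - 1))
        - (Gp.card:ℚ)^2 * (((q:ℚ)^k - 1) * ((q:ℚ)^(k+1) - 1)) * ((q:ℚ)-1) := by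
    have a1 := mul_le_mul_of_nonneg_right R1 hxnk.le
    calc ((S.card:ℚ) * ((q:ℚ)^(n-k) - 1))^2 * ((q:ℚ)^(n-k) - 1)
        ≤ ((Gp.card:ℚ) * ((q:ℚ)^(n-k+1) - 1) * ((S.card:ℚ) * ((q:ℚ)^k - 1))
            - (Gp.card:ℚ) * ((q:ℚ)^(n-k+1) - 1) * (Gm.card:ℚ) * ((q:ℚ)-1)
            + (Gp.card:ℚ) * ((S.card:ℚ) * ((q:ℚ)^(n-k) - 1)) * ((q:ℚ)-1))
            * ((q:ℚ)^(n-k) - 1) := a1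
      _ = (Gp.card:ℚ) * (S.card:ℚ) * ((q:ℚ)^(n-k) - 1)
            * (((q:ℚ)^(n-k+1) - 1)*((q:ℚ)^k - 1) + ((q:ℚ)^(n-k) - 1)*((q:ℚ) - 1))
          - (Gp.card:ℚ) * ((q:ℚ)-1)
            * ((Gm.card:ℚ) * (((q:ℚ)^(n-k+1) - 1) * ((q:ℚ)^(n-k) - 1))) := by ring
      _ = (Gp.card:ℚ) * (S.card:ℚ) * ((q:ℚ)^(n-k) - 1)
            * (((q:ℚ)^(k+1) - 1)*((q:ℚ)^(n-k) - 1) + ((q:ℚ)^k - 1)*((q:ℚ) - 1))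
          - (Gp.card:ℚ) * ((q:ℚ)-1)
            * ((Gp.card:ℚ) * (((q:ℚ)^k - 1) * ((q:ℚ)^(k+1) - 1))) := by rw [idI, q6]
      _ = (Gp.card:ℚ) * (S.card:ℚ) * ((q:ℚ)^(n-k) - 1)
            * (((q:ℚ)^(k+1) - 1)*((q:ℚ)^(n-k) - 1) + ((q:ℚ)^k - 1)*((q:ℚ) - 1))
          - (Gp.card:ℚ)^2 * (((q:ℚ)^k - 1) * ((q:ℚ)^(k+1) - 1)) * ((q:ℚ)-1) := by ring
  by_contra hcon
  push_neg at hcon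
  have hstep : (S.card:ℚ) * ((q:ℚ)^(n-k) - 1) < (Gp.card:ℚ) * ((q:ℚ)^(k+1) - 1) := by
    have a1 : (q:ℚ)^k ≤ (q:ℚ)^(k+1) := by
      rw [pf2]
      nlinarith [hpowpos k (by omega), h1Q]
    have a2 : (q:ℚ) ≤ (q:ℚ)^(n-k) := by
      calc (q:ℚ) = (q:ℚ)^1 := (pow_one _).symm
        _ ≤ (q:ℚ)^(n-k) := by
            apply pow_le_pow_right₀ (by linarith)
            omega
    have hmono : ((q:ℚ)^k - 1) * ((q:ℚ) - 1) ≤ ((q:ℚ)^(k+1) - 1) * ((q:ℚ)^(n-k) - 1) := by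
      have := mul_le_mul (by linarith : (q:ℚ)^k - 1 ≤ (q:ℚ)^(k+1) - 1)
        (by linarith : (q:ℚ) - 1 ≤ (q:ℚ)^(n-k) - 1) hx1.le (by linarith)
      linarith
    have h2 : (S.card:ℚ) * ((q:ℚ)^(n-k) - 1) * ((q:ℚ)^(n-k) - 1)
        < (Gp.card:ℚ) * ((q:ℚ)^(k+1) - 1) * ((q:ℚ)^(n-k) - 1) := by
      nlinarith [hcon, hmono, hG0]
    exact lt_of_mul_lt_mul_right h2 hxnk.le
  nlinarith [R3, mul_pos (sub_pos.mpr hcon) (sub_pos.mpr hstep)]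
end

section
/- Let q be a prime power and let 1 ≤ r ≤ k ≤ n be integers. Then 𝒞_q(n+1, k+1, r) ≤ 𝒞_q(n, k, r). -/
open Module

/-- Any subspace of dimension at most `k` extends to one of dimension exactly `k`. -/
lemma exists_superspace_aux {K V : Type*} [Field K] [AddCommGroup V] [Module K V]
    [FiniteDimensional K V] (d : ℕ) :
    ∀ Y : Submodule K V, finrank K Y + d ≤ finrank K V →
      ∃ W : Submodule K V, Y ≤ W ∧ finrank K W = finrank K Y + d := by
  induction d with
  | zero => exact fun Y _ => ⟨Y, le_rfl, by simp⟩
  | succ d ih =>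
    intro Y hY
    have hlt : Y < ⊤ := by
      rcases eq_top_or_lt_top Y with h | h
      · exfalso
        rw [h, finrank_top] at hY
        omega
      · exact h
    obtain ⟨v, -, hv⟩ := SetLike.exists_of_lt hlt
    have hv0 : v ≠ 0 := fun h => hv (h ▸ Y.zero_mem)
    have hdisj : Disjoint Y (Submodule.span K {v}) :=
      (Submodule.disjoint_span_singleton' hv0).2 hv
    have hrank : finrank K ↥(Y ⊔ Submodule.span K {v}) = finrank K Y + 1 := by
      have := Submodule.finrank_sup_add_finrank_inf_eq Y (Submodule.span K {v})
      rw [hdisj.eq_bot, finrank_bot, finrank_span_singleton hv0] at this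
      omega
    obtain ⟨W, hW1, hW2⟩ := ih (Y ⊔ Submodule.span K {v}) (by rw [hrank]; omega)
    exact ⟨W, le_trans le_sup_left hW1, by rw [hW2, hrank]; ring⟩

lemma exists_superspace_s3 {K V : Type*} [Field K] [AddCommGroup V] [Module K V]
    [FiniteDimensional K V] (Y : Submodule K V) (k : ℕ) (h1 : finrank K Y ≤ k)
    (h2 : k ≤ finrank K V) :
    ∃ W : Submodule K V, Y ≤ W ∧ finrank K W = k := by
  obtain ⟨W, hW1, hW2⟩ := exists_superspace_aux (k - finrank K Y) Y (by omega)
  exact ⟨W, hW1, by omega⟩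

lemma finrank_comap_of_surjective {K V W : Type*} [Field K] [AddCommGroup V] [Module K V]
    [AddCommGroup W] [Module K W] [FiniteDimensional K V] {π : V →ₗ[K] W}
    (hπ : Function.Surjective π) (X : Submodule K W) :
    finrank K ↥(X.comap π) = finrank K X + finrank K ↥(LinearMap.ker π) := by
  set p := X.comap π
  have hker : LinearMap.ker π ≤ p := fun x hx => by
    simp only [p, Submodule.mem_comap, LinearMap.mem_ker.1 hx, X.zero_mem]
  have hrange : LinearMap.range (π.domRestrict p) = X := by
    rw [LinearMap.range_domRestrict]
    exact Submodule.map_comap_eq_of_surjective hπ X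
  have hk : LinearMap.ker (π.domRestrict p) = (LinearMap.ker π).comap p.subtype :=
    LinearMap.ker_domRestrict p π
  have e := LinearMap.finrank_range_add_finrank_ker (π.domRestrict p)
  rw [hrange, hk] at e
  rw [← e, (Submodule.comapSubtypeEquivOfLe hker).finrank_eq]

/-- Lengthening: $\mathcal{C}_q(n+1,k+1,r) \le \mathcal{C}_q(n,k,r)$. -/
theorem lengthening (q n k r : ℕ) (hq : IsPrimePow q)
    (hr : 1 ≤ r) (hrk : r ≤ k) (hkn : k ≤ n)
    (F : Type) [Field F] [Fintype F] (hF : Fintype.card F = q) :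
    coveringNumber F (n + 1) (k + 1) r ≤ coveringNumber F n k r := by
  classical
  -- the covering set for `F^n` is nonempty
  have hfin : finrank F (Fin n → F) = n := Module.finrank_fin_fun F
  have hfin' : finrank F (Fin (n+1) → F) = n + 1 := Module.finrank_fin_fun F
  have hBne : { m : ℕ | ∃ S : Finset (Submodule F (Fin n → F)),
      S.card = m ∧
      (∀ X ∈ S, finrank F X = k) ∧
      (∀ Y : Submodule F (Fin n → F), finrank F Y = r → ∃ X ∈ S, Y ≤ X) }.Nonempty := by
    refine ⟨_, (Set.toFinite {X : Submodule F (Fin n → F) | finrank F X = k}).toFinset,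
      rfl, ?_, ?_⟩
    · intro X hX
      simpa using (Set.Finite.mem_toFinset _).1 hX
    · intro Y hY
      obtain ⟨W, hW1, hW2⟩ := exists_superspace_s3 Y k (by omega) (by omega)
      exact ⟨W, (Set.Finite.mem_toFinset _).2 hW2, hW1⟩
  obtain ⟨S, hScard, hSdim, hScov⟩ := Nat.sInf_mem hBne
  -- the projection `F^{n+1} → F^n`
  set π : (Fin (n+1) → F) →ₗ[F] (Fin n → F) := LinearMap.funLeft F F Fin.castSucc
  have hπ : Function.Surjective π :=
    LinearMap.funLeft_surjective_of_injective F F _ (Fin.castSucc_injective n)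
  have hkerπ : finrank F ↥(LinearMap.ker π) = 1 := by
    have e := LinearMap.finrank_range_add_finrank_ker π
    rw [LinearMap.range_eq_top.2 hπ, finrank_top, hfin, hfin'] at e
    omega
  refine Nat.sInf_le ?_
  refine ⟨S.image (Submodule.comap π), ?_, ?_, ?_⟩
  · rw [Finset.card_image_of_injective _ (Submodule.comap_injective_of_surjective hπ), hScard, coveringNumber]
  · intro X' hX'
    obtain ⟨X, hX, rfl⟩ := Finset.mem_image.1 hX'
    rw [finrank_comap_of_surjective hπ, hSdim X hX, hkerπ]
  · intro Y hY
    have hZ : finrank F ↥(Y.map π) ≤ r := by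
      rw [← hY]; exact Submodule.finrank_map_le π Y
    obtain ⟨W, hW1, hW2⟩ := exists_superspace_s3 (Y.map π) r hZ (by omega)
    obtain ⟨X, hX, hWX⟩ := hScov W hW2
    refine ⟨X.comap π, Finset.mem_image_of_mem _ hX, ?_⟩
    exact le_trans (Submodule.le_comap_map π Y) (Submodule.comap_mono (le_trans hW1 hWX))
end

section
/- Let q be a prime power and let 1 ≤ k ≤ n be integers. Then 𝒞_q(n,k,1) = ⌈ (q^n−1)/(q^k−1) ⌉. -/
open Polynomial Module


variable (F : Type) [Field F] [Fintype F]

/-- Auxiliary: splitting field of `X^Q - X` over `F`. -/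
noncomputable abbrev FExt (Q : ℕ) : Type := SplittingField (X ^ Q - X : F[X])

noncomputable instance (Q : ℕ) : Field (FExt F Q) := inferInstanceAs (Field (SplittingField _))
noncomputable instance (Q : ℕ) : Algebra F (FExt F Q) := inferInstanceAs (Algebra F (SplittingField (X ^ Q - X : F[X])))
instance (Q : ℕ) : FiniteDimensional F (FExt F Q) := by
  unfold FExt; infer_instance

theorem FExt_finrank (d : ℕ) (hd : d ≠ 0) :
    finrank F (FExt F (Fintype.card F ^ d)) = d := by
  classical
  have hq2 : (1:ℕ) < Fintype.card F := Fintype.one_lt_card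
  obtain ⟨p, hp⟩ := CharP.exists F
  haveI : CharP F p := hp
  obtain ⟨s, hps, hcard⟩ := FiniteField.card F p
  haveI hpfact : Fact p.Prime := ⟨hps⟩
  have hexp : p ^ ((s : ℕ) * d) = Fintype.card F ^ d := by rw [pow_mul, hcard]
  set e := (s : ℕ) * d with he
  have he0 : e ≠ 0 := by positivity
  rw [← hexp]
  set E := FExt F (p ^ e) with hE
  haveI : Finite E := Module.finite_of_finite F
  haveI : Fintype E := Fintype.ofFinite E
  haveI : CharP E p := (Algebra.charP_iff F E p).mp ‹_›
  have hp1 : 1 < p := hps.one_lt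
  have hQ1 : 1 < p ^ e := Nat.one_lt_pow he0 hp1
  set g : F[X] := X ^ p ^ e - X with hg
  have aux : g ≠ 0 := FiniteField.X_pow_card_pow_sub_X_ne_zero F he0 hp1
  have sep : Separable g := galois_poly_separable p (p ^ e) (dvd_pow_self p he0)
  have key : Fintype.card (g.rootSet E) = g.natDegree :=
    card_rootSet_eq_natDegree sep (SplittingField.splits g)
  have ndeg : g.natDegree = p ^ e := FiniteField.X_pow_card_pow_sub_X_natDegree_eq F he0 hp1
  rw [ndeg] at key
  have huniv : g.rootSet E = Set.univ := by
    rw [Set.eq_univ_iff_forall]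
    suffices h : ∀ x, x ∈ (⊤ : Subalgebra F E) → x ∈ g.rootSet E by
      intro x; exact h x trivial
    rw [← SplittingField.adjoin_rootSet]
    simp_rw [Algebra.mem_adjoin_iff]
    intro x hx
    refine Subring.closure_induction ?_ ?_ ?_ ?_ ?_ ?_ hx <;> simp_rw [mem_rootSet_of_ne aux]
    · rintro x (⟨r, rfl⟩ | hx)
      · simp only [hg, map_sub, map_pow, aeval_X]
        rw [← map_pow]
        have hr : r ^ p ^ e = r := by
          rw [he, pow_mul, ← hcard]; exact FiniteField.pow_card_pow d r
        rw [hr, sub_self]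
      · exact (mem_rootSet_of_ne aux).mp hx
    · simp only [hg, map_sub, map_pow, aeval_X, map_zero]
      rw [zero_pow (by positivity), sub_zero]
    · simp only [hg, map_sub, map_pow, aeval_X, map_one, one_pow, sub_self]
    · intro x y _ _ hxr hyr
      simp only [hg, map_sub, map_pow, aeval_X, sub_eq_zero] at *
      rw [add_pow_char_pow, hxr, hyr]
    · intro x _ hxr
      simp only [hg, map_sub, map_pow, aeval_X, sub_eq_zero] at *
      rw [neg_pow, hxr, neg_one_pow_char_pow]
      exact neg_one_mul x
    · intro x y _ _ hxr hyr
      simp only [hg, map_sub, map_pow, aeval_X, mul_pow, sub_eq_zero] at *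
      rw [hxr, hyr]
  simp_rw [huniv, ← Fintype.ofEquiv_card (Equiv.Set.univ _)] at key
  rw [@card_eq_pow_finrank F _ _ _ _ _ (_)] at key
  exact Nat.pow_right_injective hq2 (key.trans hexp)

theorem FExt_card (d : ℕ) (hd : d ≠ 0) :
    Nat.card (FExt F (Fintype.card F ^ d)) = Fintype.card F ^ d := by
  classical
  haveI : Finite (FExt F (Fintype.card F ^ d)) := Module.finite_of_finite F
  haveI : Fintype (FExt F (Fintype.card F ^ d)) := Fintype.ofFinite _
  rw [Nat.card_eq_fintype_card, card_eq_pow_finrank (K := F), FExt_finrank F d hd]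


section Covers

variable {F : Type} [Field F]

/-- Transport a point cover along a linear equivalence. -/
theorem cover_map {V W : Type} [AddCommGroup V] [Module F V] [AddCommGroup W] [Module F W]
    (k : ℕ) (e : V ≃ₗ[F] W) (S : Finset (Submodule F V))
    (hd : ∀ X ∈ S, finrank F X = k) (hc : ∀ v : V, v ≠ 0 → ∃ X ∈ S, v ∈ X) :
    ∃ T : Finset (Submodule F W), T.card ≤ S.card ∧ (∀ X ∈ T, finrank F X = k) ∧
      ∀ w : W, w ≠ 0 → ∃ X ∈ T, w ∈ X := by
  classical
  refine ⟨S.image (Submodule.map (e : V →ₗ[F] W)), Finset.card_image_le, ?_, ?_⟩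
  · intro X hX
    obtain ⟨Y, hY, rfl⟩ := Finset.mem_image.mp hX
    rw [LinearEquiv.finrank_map_eq]
    exact hd Y hY
  · intro w hw
    obtain ⟨X, hX, hv⟩ := hc (e.symm w) (by simp [LinearEquiv.map_eq_zero_iff, hw])
    exact ⟨Submodule.map (e : V →ₗ[F] W) X, Finset.mem_image_of_mem _ hX,
      ⟨e.symm w, hv, e.apply_symm_apply w⟩⟩

/-- Graph construction: cover `M × N` given a family of maps `M →ₗ N` that is
pointwise surjective, together with a cover of `N`. -/
theorem graph_cover {M N : Type} [AddCommGroup M] [Module F M] [AddCommGroup N] [Module F N]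
    [FiniteDimensional F M] [FiniteDimensional F N]
    (k : ℕ) (A : Type) [Fintype A] (f : A → (M →ₗ[F] N))
    (hsurj : ∀ (m : M) (w : N), m ≠ 0 → ∃ α : A, f α m = w)
    (hM : finrank F M = k)
    (S₀ : Finset (Submodule F N)) (hd₀ : ∀ Y ∈ S₀, finrank F Y = k)
    (hc₀ : ∀ w : N, w ≠ 0 → ∃ Y ∈ S₀, w ∈ Y) :
    ∃ S : Finset (Submodule F (M × N)), S.card ≤ Fintype.card A + S₀.card ∧
      (∀ X ∈ S, finrank F X = k) ∧ ∀ v : M × N, v ≠ 0 → ∃ X ∈ S, v ∈ X := by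
  classical
  set G : A → Submodule F (M × N) :=
    fun α => LinearMap.range (LinearMap.prod LinearMap.id (f α)) with hG
  have hGinj : ∀ α : A, Function.Injective (LinearMap.prod (LinearMap.id : M →ₗ[F] M) (f α)) :=
    fun α x y h => by simpa using congrArg Prod.fst h
  set S : Finset (Submodule F (M × N)) :=
    (Finset.univ.image G) ∪ S₀.image (fun Y => Y.map (LinearMap.inr F M N)) with hS
  have hinr : Function.Injective (LinearMap.inr F M N) := LinearMap.inr_injective
  refine ⟨S, ?_, ?_, ?_⟩
  · calc S.card ≤ (Finset.univ.image G).card + (S₀.image _).card := Finset.card_union_le _ _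
      _ ≤ Fintype.card A + S₀.card := by
          gcongr <;> [exact (Finset.card_image_le.trans (by simp)); exact Finset.card_image_le]
  · intro X hX
    rcases Finset.mem_union.mp hX with h | h
    · obtain ⟨α, _, rfl⟩ := Finset.mem_image.mp h
      rw [hG]
      rw [LinearMap.finrank_range_of_inj (hGinj α)]
      exact hM
    · obtain ⟨Y, hY, rfl⟩ := Finset.mem_image.mp h
      rw [← LinearEquiv.finrank_eq (Submodule.equivMapOfInjective _ hinr Y)]
      exact hd₀ Y hY
  · rintro ⟨m, w⟩ hv
    by_cases hm : m = 0
    · subst hm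
      have hw : w ≠ 0 := fun h => hv (by simp [h])
      obtain ⟨Y, hY, hwY⟩ := hc₀ w hw
      refine ⟨Y.map (LinearMap.inr F M N), Finset.mem_union_right _
        (Finset.mem_image_of_mem _ hY), ⟨w, hwY, rfl⟩⟩
    · obtain ⟨α, hα⟩ := hsurj m w hm
      refine ⟨G α, Finset.mem_union_left _ (Finset.mem_image_of_mem _ (Finset.mem_univ α)),
        ⟨m, ?_⟩⟩
      simp [hα]

end Covers


variable {F : Type} [Field F]

/-- Base construction: cover `E × (E × C)` where `E` is a field extension. -/
theorem base_cover (E : Type) [Field E] [Algebra F E] [FiniteDimensional F E] [Fintype E]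
    (C : Type) [AddCommGroup C] [Module F C] [FiniteDimensional F C]
    (k : ℕ) (hkC : finrank F E + finrank F C = k) :
    ∃ S : Finset (Submodule F (E × (E × C))), S.card ≤ Fintype.card E + 1 ∧
      (∀ X ∈ S, finrank F X = k) ∧ ∀ v : E × (E × C), v ≠ 0 → ∃ X ∈ S, v ∈ X := by
  classical
  set g : E → ((E × C) →ₗ[F] (E × (E × C))) := fun α =>
    LinearMap.prod (LinearMap.fst F E C)
      (LinearMap.prod ((LinearMap.mulLeft F α).comp (LinearMap.fst F E C))
        (LinearMap.snd F E C)) with hg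
  have hgapp : ∀ (α : E) (x : E) (c : C), g α (x, c) = (x, (α * x, c)) := fun α x c => rfl
  have hginj : ∀ α : E, Function.Injective (g α) := by
    intro α x y h
    have h1 := congrArg Prod.fst h
    have h2 := congrArg (fun v => v.2.2) h
    simp only [hg, LinearMap.prod_apply, Pi.prod, LinearMap.fst_apply, LinearMap.snd_apply] at h1 h2
    exact Prod.ext h1 h2
  set Xinf : Submodule F (E × (E × C)) := LinearMap.range (LinearMap.inr F E (E × C)) with hXinf
  set S : Finset (Submodule F (E × (E × C))) :=
    insert Xinf (Finset.univ.image fun α => LinearMap.range (g α)) with hS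
  have hdim : finrank F (E × C) = k := by rw [Module.finrank_prod, hkC]
  refine ⟨S, ?_, ?_, ?_⟩
  · calc S.card ≤ (Finset.univ.image fun α => LinearMap.range (g α)).card + 1 :=
          Finset.card_insert_le _ _
      _ ≤ Fintype.card E + 1 := by
          gcongr
          exact Finset.card_image_le.trans (by simp)
  · intro X hX
    rcases Finset.mem_insert.mp hX with h | h
    · subst h
      rw [LinearMap.finrank_range_of_inj LinearMap.inr_injective, hdim]
    · obtain ⟨α, _, rfl⟩ := Finset.mem_image.mp h
      rw [LinearMap.finrank_range_of_inj (hginj α), hdim]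
  · rintro ⟨x, y, c⟩ hv
    by_cases hx : x = 0
    · subst hx
      exact ⟨Xinf, Finset.mem_insert_self _ _, ⟨(y, c), rfl⟩⟩
    · refine ⟨LinearMap.range (g (y * x⁻¹)), Finset.mem_insert_of_mem
        (Finset.mem_image_of_mem _ (Finset.mem_univ _)), ⟨(x, c), ?_⟩⟩
      rw [hgapp]
      rw [inv_mul_cancel_right₀ hx]

/-- Counting lower bound for point covers. -/
theorem cover_lb [Fintype F] {V : Type} [AddCommGroup V] [Module F V] [Fintype V]
    (k : ℕ) (S : Finset (Submodule F V))
    (hd : ∀ X ∈ S, finrank F X = k) (hc : ∀ v : V, v ≠ 0 → ∃ X ∈ S, v ∈ X) :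
    Fintype.card V - 1 ≤ S.card * (Fintype.card F ^ k - 1) := by
  classical
  have hsub : Finset.univ.erase (0 : V) ⊆
      S.biUnion (fun X => (Finset.univ.filter (fun v => v ∈ X)).erase 0) := by
    intro v hv
    have hv0 : v ≠ 0 := Finset.ne_of_mem_erase hv
    obtain ⟨X, hX, hvX⟩ := hc v hv0
    exact Finset.mem_biUnion.mpr ⟨X, hX, Finset.mem_erase.mpr ⟨hv0, by simp [hvX]⟩⟩
  have hcard : ∀ X ∈ S, ((Finset.univ.filter (fun v => v ∈ X)).erase 0).card
      = Fintype.card F ^ k - 1 := by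
    intro X hX
    rw [Finset.card_erase_of_mem (by simp)]
    congr 1
    have h1 : (Finset.univ.filter (fun v => v ∈ X)).card = Fintype.card X := by
      rw [Fintype.card_subtype]
    rw [h1, card_eq_pow_finrank (K := F), hd X hX]
  calc Fintype.card V - 1 = (Finset.univ.erase (0 : V)).card := by
        rw [Finset.card_erase_of_mem (Finset.mem_univ 0), Finset.card_univ]
    _ ≤ (S.biUnion (fun X => (Finset.univ.filter (fun v => v ∈ X)).erase 0)).card :=
        Finset.card_le_card hsub
    _ ≤ ∑ X ∈ S, ((Finset.univ.filter (fun v => v ∈ X)).erase 0).card :=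
        Finset.card_biUnion_le
    _ ≤ ∑ _X ∈ S, (Fintype.card F ^ k - 1) :=
        Finset.sum_le_sum (fun X hX => le_of_eq (hcard X hX))
    _ = S.card * (Fintype.card F ^ k - 1) := by rw [Finset.sum_const, smul_eq_mul]

/-- The target value `⌈(q^n-1)/(q^k-1)⌉` as a natural number. -/
noncomputable def cc (q k n : ℕ) : ℕ := (⌈((q:ℚ)^n - 1) / ((q:ℚ)^k - 1)⌉).toNat

section ccLemmas

variable {q k : ℕ} (hq : 2 ≤ q) (hk : 1 ≤ k)
include hq hk

theorem qk_pos : (0:ℚ) < (q:ℚ)^k - 1 := by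
  have : (2:ℚ) ≤ (q:ℚ) := by exact_mod_cast hq
  have h2 : (2:ℚ) ≤ (q:ℚ)^k := le_trans this (le_self_pow₀ (by linarith) (by omega))
  linarith

theorem cc_k : cc q k k = 1 := by
  unfold cc
  rw [div_self (qk_pos hq hk).ne']
  simp

theorem cc_le_iff (t n : ℕ) : cc q k n ≤ t ↔ q^n - 1 ≤ t * (q^k - 1) := by
  have hB := qk_pos hq hk
  have h1n : 1 ≤ q^n := Nat.one_le_pow _ _ (by omega)
  have h1k : 1 ≤ q^k := Nat.one_le_pow _ _ (by omega)
  unfold cc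
  rw [Int.toNat_le, Int.ceil_le, div_le_iff₀ hB]
  rw [show ((t:ℤ):ℚ) = ((t:ℕ):ℚ) by norm_cast]
  constructor
  · intro h
    have := h
    rw [show ((q:ℚ)^n - 1) = ((q^n - 1 : ℕ) : ℚ) by push_cast [h1n]; ring,
      show ((t:ℚ) * ((q:ℚ)^k - 1)) = ((t * (q^k - 1) : ℕ) : ℚ) by push_cast [h1k]; ring] at this
    exact_mod_cast this
  · intro h
    have : ((q^n - 1 : ℕ) : ℚ) ≤ ((t * (q^k - 1) : ℕ) : ℚ) := by exact_mod_cast h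
    rw [show (((q^n - 1 : ℕ)) : ℚ) = (q:ℚ)^n - 1 by push_cast [h1n]; ring,
      show (((t * (q^k - 1) : ℕ)) : ℚ) = (t:ℚ) * ((q:ℚ)^k - 1) by push_cast [h1k]; ring] at this
    exact this

theorem cc_base {n : ℕ} (hkn : k < n) (hn : n < 2*k) : cc q k n = q^(n-k) + 1 := by
  have hB := qk_pos hq hk
  set b := n - k with hb
  have hb1 : 1 ≤ b := by omega
  have hbk : b ≤ k := by omega
  have hq1 : (1:ℚ) < (q:ℚ) := by exact_mod_cast (by omega : 1 < q)
  have hpow : (q:ℚ)^b * (q:ℚ)^k = (q:ℚ)^n := by rw [← pow_add]; congr 1; omega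
  have h1 : (1:ℚ) < (q:ℚ)^b := one_lt_pow₀ hq1 (by omega)
  have h2 : (q:ℚ)^b ≤ (q:ℚ)^k := pow_le_pow_right₀ (le_of_lt hq1) hbk
  unfold cc
  have : ⌈((q:ℚ)^n - 1) / ((q:ℚ)^k - 1)⌉ = ((q^b : ℕ) : ℤ) + 1 := by
    rw [Int.ceil_eq_iff]
    constructor
    · rw [lt_div_iff₀ hB]
      push_cast
      nlinarith
    · rw [div_le_iff₀ hB]
      push_cast
      nlinarith
  rw [this, show ((q^b:ℕ):ℤ) + 1 = ((q^b + 1 : ℕ) : ℤ) by push_cast; ring, Int.toNat_natCast]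

theorem cc_step {n : ℕ} (hn : 2*k ≤ n) : cc q k n = q^(n-k) + cc q k (n-k) := by
  have hB := qk_pos hq hk
  set b := n - k with hb
  have hpow : (q:ℚ)^b * (q:ℚ)^k = (q:ℚ)^n := by rw [← pow_add]; congr 1; omega
  have key : ((q:ℚ)^n - 1)/((q:ℚ)^k - 1)
      = ((q:ℚ)^b - 1)/((q:ℚ)^k - 1) + (((q^b : ℕ) : ℤ) : ℚ) := by
    push_cast
    field_simp
    linear_combination -hpow
  have hnn : 0 ≤ ⌈((q:ℚ)^b - 1)/((q:ℚ)^k - 1)⌉ := by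
    apply Int.ceil_nonneg
    apply div_nonneg _ hB.le
    have : (1:ℚ) ≤ (q:ℚ)^b := one_le_pow₀ (by exact_mod_cast (by omega : 1 ≤ q))
    linarith
  unfold cc
  rw [key, Int.ceil_add_intCast, Int.toNat_add hnn (by positivity)]
  rw [Int.toNat_natCast]
  omega

end ccLemmas

theorem exists_cover (F : Type) [Field F] [Fintype F] (k : ℕ) (hk : 1 ≤ k) :
    ∀ n : ℕ, k ≤ n → ∀ (V : Type) [AddCommGroup V] [Module F V] [Module.Finite F V],
    finrank F V = n →
    ∃ S : Finset (Submodule F V), S.card ≤ cc (Fintype.card F) k n ∧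
      (∀ X ∈ S, finrank F X = k) ∧ ∀ v : V, v ≠ 0 → ∃ X ∈ S, v ∈ X := by
  have hq : 2 ≤ Fintype.card F := Fintype.one_lt_card
  intro n
  induction n using Nat.strong_induction_on with
  | _ n IH =>
    intro hkn V _ _ _ hV
    by_cases hnk : n = k
    · refine ⟨{⊤}, ?_, ?_, ?_⟩
      · rw [hnk, cc_k hq hk]; simp
      · intro X hX
        rw [Finset.mem_singleton.mp hX, finrank_top, hV, hnk]
      · intro v _; exact ⟨⊤, Finset.mem_singleton_self _, Submodule.mem_top⟩
    · by_cases hn2 : n < 2*k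
      -- base case : k < n < 2k
      · have hkn' : k < n := lt_of_le_of_ne hkn (Ne.symm hnk)
        set b := n - k with hb
        have hb0 : b ≠ 0 := by omega
        set E := FExt F (Fintype.card F ^ b) with hE
        haveI : Finite E := Module.finite_of_finite F
        haveI : Fintype E := Fintype.ofFinite E
        have hEr : finrank F E = b := FExt_finrank F b hb0
        have hEc : Fintype.card E = Fintype.card F ^ b := by
          rw [← Nat.card_eq_fintype_card]; exact FExt_card F b hb0
        set C := (Fin (k - b) → F) with hC
        have hCr : finrank F C = k - b := Module.finrank_fin_fun F
        obtain ⟨S', hS'card, hS'dim, hS'cov⟩ :=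
          base_cover (F := F) E C k (by rw [hEr, hCr]; omega)
        have hfr : finrank F (E × (E × C)) = n := by
          rw [Module.finrank_prod, Module.finrank_prod, hEr, hCr]; omega
        obtain ⟨e⟩ : Nonempty ((E × (E × C)) ≃ₗ[F] V) :=
          FiniteDimensional.nonempty_linearEquiv_of_finrank_eq (by rw [hfr, hV])
        obtain ⟨T, hTcard, hTdim, hTcov⟩ := cover_map k e S' hS'dim hS'cov
        refine ⟨T, ?_, hTdim, hTcov⟩
        rw [cc_base hq hk hkn' hn2]
        calc T.card ≤ S'.card := hTcard
          _ ≤ Fintype.card E + 1 := hS'card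
          _ = Fintype.card F ^ (n - k) + 1 := by rw [hEc]
      -- step case : n ≥ 2k
      · have h2k : 2*k ≤ n := by omega
        set m := n - k with hm
        have hm0 : m ≠ 0 := by omega
        set E := FExt F (Fintype.card F ^ m) with hE
        haveI : Finite E := Module.finite_of_finite F
        haveI : Fintype E := Fintype.ofFinite E
        have hEr : finrank F E = m := FExt_finrank F m hm0
        have hEc : Fintype.card E = Fintype.card F ^ m := by
          rw [← Nat.card_eq_fintype_card]; exact FExt_card F m hm0
        obtain ⟨S₀, hS₀card, hS₀dim, hS₀cov⟩ := IH m (by omega) (by omega) E hEr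
        -- a k-dimensional subspace of E
        set bE : Basis (Fin m) F E := (Module.finBasis F E).reindex (finCongr (by rw [hEr])) with hbE
        have hkm : k ≤ m := by omega
        have hli : LinearIndependent F (fun i : Fin k => bE (Fin.castLE hkm i)) :=
          bE.linearIndependent.comp _ (Fin.castLE_injective hkm)
        set U : Submodule F E := Submodule.span F (Set.range fun i : Fin k => bE (Fin.castLE hkm i))
          with hU
        have hUr : finrank F U = k := by
          rw [finrank_span_eq_card hli, Fintype.card_fin]
        set f : E → (U →ₗ[F] E) := fun α => (LinearMap.mulLeft F α).comp U.subtype with hf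
        have hsurj : ∀ (u : U) (w : E), u ≠ 0 → ∃ α : E, f α u = w := by
          intro u w hu
          have hu0 : (u : E) ≠ 0 := fun h => hu (Subtype.ext h)
          refine ⟨w * (u : E)⁻¹, ?_⟩
          simp only [hf, LinearMap.comp_apply, Submodule.subtype_apply, LinearMap.mulLeft_apply]
          rw [inv_mul_cancel_right₀ hu0]
        obtain ⟨S', hS'card, hS'dim, hS'cov⟩ := graph_cover k E f hsurj hUr S₀ hS₀dim hS₀cov
        have hfr : finrank F (U × E) = n := by
          rw [Module.finrank_prod, hUr, hEr]; omega
        obtain ⟨e⟩ : Nonempty ((U × E) ≃ₗ[F] V) :=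
          FiniteDimensional.nonempty_linearEquiv_of_finrank_eq (by rw [hfr, hV])
        obtain ⟨T, hTcard, hTdim, hTcov⟩ := cover_map k e S' hS'dim hS'cov
        refine ⟨T, ?_, hTdim, hTcov⟩
        rw [cc_step hq hk h2k]
        calc T.card ≤ S'.card := hTcard
          _ ≤ Fintype.card E + S₀.card := hS'card
          _ ≤ Fintype.card F ^ (n - k) + cc (Fintype.card F) k (n - k) := by
              rw [hEc]; exact Nat.add_le_add_left hS₀card _


open Module

/-- Exact value of $\mathcal{C}_q(n,k,1)$. -/
theorem covering_points (q n k : ℕ) (hq : IsPrimePow q)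
    (hk : 1 ≤ k) (hkn : k ≤ n)
    (F : Type) [Field F] [Fintype F] (hF : Fintype.card F = q) :
    (coveringNumber F n k 1 : ℤ) = ⌈((q : ℚ) ^ n - 1) / ((q : ℚ) ^ k - 1)⌉ := by
  classical
  subst hF
  set q := Fintype.card F with hqdef
  have hq2 : 2 ≤ q := Fintype.one_lt_card
  have hVr : finrank F (Fin n → F) = n := Module.finrank_fin_fun F
  have hVc : Fintype.card (Fin n → F) = q ^ n := by
    rw [Fintype.card_fun, Fintype.card_fin]
  -- the lower bound, for any admissible finset
  have lb : ∀ T : Finset (Submodule F (Fin n → F)),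
      (∀ X ∈ T, finrank F X = k) →
      (∀ Y : Submodule F (Fin n → F), finrank F Y = 1 → ∃ X ∈ T, Y ≤ X) →
      cc q k n ≤ T.card := by
    intro T hdim hY
    have hcov : ∀ v : Fin n → F, v ≠ 0 → ∃ X ∈ T, v ∈ X := by
      intro v hv
      obtain ⟨X, hX, hle⟩ := hY (Submodule.span F {v}) (finrank_span_singleton hv)
      exact ⟨X, hX, hle (Submodule.subset_span (Set.mem_singleton v))⟩
    have := cover_lb k T hdim hcov
    rw [hVc] at this
    exact (cc_le_iff hq2 hk T.card n).mpr this
  -- an optimal cover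
  obtain ⟨S, hScard, hSdim, hScov⟩ :=
    exists_cover F k hk n hkn (Fin n → F) hVr
  have hSY : ∀ Y : Submodule F (Fin n → F), finrank F Y = 1 → ∃ X ∈ S, Y ≤ X := by
    intro Y hY
    have hYbot : Y ≠ ⊥ := by
      intro h
      rw [h, finrank_bot] at hY
      exact one_ne_zero hY.symm
    obtain ⟨v, hvY, hv0⟩ := Y.exists_mem_ne_zero_of_ne_bot hYbot
    obtain ⟨X, hX, hvX⟩ := hScov v hv0
    refine ⟨X, hX, ?_⟩
    have hspan : Submodule.span F {v} = Y := by
      apply Submodule.eq_of_le_of_finrank_le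
        (Submodule.span_le.mpr (Set.singleton_subset_iff.mpr hvY))
      rw [hY, finrank_span_singleton hv0]
    rw [← hspan]
    exact Submodule.span_le.mpr (Set.singleton_subset_iff.mpr hvX)
  have hScc : S.card = cc q k n := le_antisymm hScard (lb S hSdim hSY)
  have hmem : cc q k n ∈ { m : ℕ | ∃ S : Finset (Submodule F (Fin n → F)),
      S.card = m ∧ (∀ X ∈ S, finrank F X = k) ∧
      (∀ Y : Submodule F (Fin n → F), finrank F Y = 1 → ∃ X ∈ S, Y ≤ X) } :=
    ⟨S, hScc, hSdim, hSY⟩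
  have hsInf : coveringNumber F n k 1 = cc q k n := by
    apply le_antisymm (Nat.sInf_le hmem)
    obtain ⟨T, hTcard, hTdim, hTY⟩ := Nat.sInf_mem (Set.nonempty_of_mem hmem)
    rw [← hTcard]
    exact lb T hTdim hTY
  rw [hsInf]
  have hnn : (0:ℚ) ≤ ((q:ℚ)^n - 1) / ((q:ℚ)^k - 1) := by
    apply div_nonneg _ (qk_pos hq2 hk).le
    have : (1:ℚ) ≤ (q:ℚ)^n := one_le_pow₀ (by exact_mod_cast (by omega : 1 ≤ q))
    linarith
  rw [cc, Int.toNat_of_nonneg (Int.ceil_nonneg hnn)]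
end

section
/- Let q be a prime power and let 1 ≤ r ≤ n−1 be integers. Then 𝒞_q(n, n−1, r) = (q^{r+1}−1)/(q−1). -/
open Module

namespace CoveringAux

open Finset

lemma geom_aux (p : ℕ) (k : ℕ) :
    p * (∑ i ∈ Finset.range k, (p+1)^i) + 1 = (p+1)^k := by
  induction k with
  | zero => simp
  | succ k ih =>
    rw [Finset.sum_range_succ, pow_succ]
    calc p * ((∑ i ∈ Finset.range k, (p+1)^i) + (p+1)^k) + 1
        = (p * (∑ i ∈ Finset.range k, (p+1)^i) + 1) + p * (p+1)^k := by ring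
      _ = (p+1)^k + p * (p+1)^k := by rw [ih]
      _ = (p+1)^k * (p+1) := by ring

variable {F : Type} [Field F]

section General

variable {V : Type} [AddCommGroup V] [Module F V]

lemma exists_ne_zero {f : V →ₗ[F] F} (hf : f ≠ 0) : ∃ x, f x ≠ 0 := by
  by_contra hc
  push_neg at hc
  exact hf (LinearMap.ext fun v => by simp [hc v])

lemma smul_of_ker_le_ker {f g : V →ₗ[F] F} (hf : f ≠ 0)
    (h : LinearMap.ker f ≤ LinearMap.ker g) : ∃ c : F, g = c • f := by
  obtain ⟨x, hx⟩ := exists_ne_zero hf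
  refine ⟨g x / f x, LinearMap.ext fun v => ?_⟩
  have hv : v - (f v / f x) • x ∈ LinearMap.ker f := by
    simp [LinearMap.mem_ker, map_sub, map_smul, smul_eq_mul, div_mul_cancel₀ _ hx]
  have hg := h hv
  rw [LinearMap.mem_ker, map_sub, map_smul, smul_eq_mul, sub_eq_zero] at hg
  rw [LinearMap.smul_apply, smul_eq_mul, hg]
  field_simp

lemma finrank_ker_add_one [FiniteDimensional F V] {f : V →ₗ[F] F} (hf : f ≠ 0) :
    finrank F (LinearMap.ker f) + 1 = finrank F V := by
  obtain ⟨x, hx⟩ := exists_ne_zero hf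
  have hsurj : Function.Surjective f := by
    intro y
    exact ⟨(y / f x) • x, by simp [smul_eq_mul, div_mul_cancel₀ _ hx]⟩
  have hr : LinearMap.range f = ⊤ := LinearMap.range_eq_top.mpr hsurj
  have h2 := LinearMap.finrank_range_add_finrank_ker f
  rw [hr, finrank_top, finrank_self] at h2
  omega

end General

variable [Fintype F] {n : ℕ}

lemma step (S : Finset (Submodule F (Fin n → F))) (W : Submodule F (Fin n → F))
    (hW : ∀ X ∈ S, ¬ W ≤ X)
    (hcard : S.card * (Fintype.card F - 1) + 1 < Fintype.card F ^ finrank F W) :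
    ∃ W' : Submodule F (Fin n → F), W' ≤ W ∧ finrank F W' + 1 = finrank F W ∧
      ∀ X ∈ S, ¬ W' ≤ X := by
  classical
  letI : Finite (Dual F W) := Module.finite_of_finite F
  letI : Fintype (Dual F W) := Fintype.ofFinite _
  set K : Dual F W → Submodule F (Fin n → F) :=
    fun φ => Submodule.map W.subtype (LinearMap.ker φ) with hK
  set Φ : Finset (Dual F W) := Finset.univ.erase 0 with hΦ
  have hΦcard : Φ.card = Fintype.card F ^ finrank F W - 1 := by
    rw [hΦ, Finset.card_erase_of_mem (mem_univ _), Finset.card_univ,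
      card_eq_pow_finrank (K := F), Subspace.dual_finrank_eq]
  set Bad : Finset (Dual F W) := Φ.filter (fun φ => ∃ X ∈ S, K φ = W ⊓ X) with hBadDef
  have hBad : Bad.card ≤ S.card * (Fintype.card F - 1) := by
    have hsub : Bad ⊆ S.biUnion fun X => Φ.filter fun φ => K φ = W ⊓ X := by
      intro φ hφ
      rw [hBadDef, Finset.mem_filter] at hφ
      obtain ⟨hφΦ, X, hX, hKX⟩ := hφ
      exact Finset.mem_biUnion.mpr ⟨X, hX, Finset.mem_filter.mpr ⟨hφΦ, hKX⟩⟩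
    refine le_trans (Finset.card_le_card hsub) (le_trans Finset.card_biUnion_le ?_)
    rw [mul_comm]
    refine le_trans (Finset.sum_le_card_nsmul _ _ (Fintype.card F - 1) ?_) (by simp [mul_comm])
    intro X hX
    by_cases hne : (Φ.filter fun φ => K φ = W ⊓ X).Nonempty
    · obtain ⟨ψ, hψ⟩ := hne
      have hψ0 : ψ ≠ 0 := (Finset.mem_erase.mp (Finset.mem_filter.mp hψ).1).1
      have hψK : K ψ = W ⊓ X := (Finset.mem_filter.mp hψ).2
      have hsub2 : (Φ.filter fun φ => K φ = W ⊓ X) ⊆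
          (Finset.univ.erase (0:F)).image (· • ψ) := by
        intro φ hφ
        have hφ0 : φ ≠ 0 := (Finset.mem_erase.mp (Finset.mem_filter.mp hφ).1).1
        have hφK : K φ = W ⊓ X := (Finset.mem_filter.mp hφ).2
        have hker : LinearMap.ker ψ ≤ LinearMap.ker φ := by
          have := Submodule.map_injective_of_injective W.injective_subtype
            (hφK.trans hψK.symm)
          exact this.ge
        obtain ⟨c, hc⟩ := smul_of_ker_le_ker hψ0 hker
        have hc0 : c ≠ 0 := by
          rintro rfl
          rw [zero_smul] at hc
          exact hφ0 hc
        exact Finset.mem_image.mpr ⟨c, Finset.mem_erase.mpr ⟨hc0, mem_univ _⟩, hc.symm⟩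
      refine le_trans (Finset.card_le_card hsub2) (le_trans Finset.card_image_le ?_)
      rw [Finset.card_erase_of_mem (mem_univ _), Finset.card_univ]
    · rw [Finset.not_nonempty_iff_eq_empty] at hne
      simp [hne]
  have hBadΦ : Bad ⊆ Φ := Finset.filter_subset _ _
  have hsd : (Φ \ Bad).Nonempty := by
    rw [← Finset.card_pos, Finset.card_sdiff_of_subset hBadΦ, hΦcard]
    have h1 : 1 ≤ Fintype.card F := Fintype.card_pos
    omega
  obtain ⟨φ, hφsd⟩ := hsd
  rw [Finset.mem_sdiff] at hφsd
  obtain ⟨hφΦ, hφBad⟩ := hφsd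
  have hφ0 : φ ≠ 0 := (Finset.mem_erase.mp hφΦ).1
  refine ⟨K φ, Submodule.map_subtype_le _ _, ?_, ?_⟩
  · rw [hK]
    simp only
    rw [Submodule.finrank_map_subtype_eq]
    exact finrank_ker_add_one hφ0
  · intro X hX hle
    have hKW : K φ ≤ W := Submodule.map_subtype_le _ _
    have h1 : K φ ≤ W ⊓ X := le_inf hKW hle
    have h2 : W ⊓ X < W := by
      refine lt_of_le_of_ne inf_le_left ?_
      intro h
      exact hW X hX (h ▸ inf_le_right)
    have h3 : finrank F ↥(W ⊓ X) < finrank F W := Submodule.finrank_lt_finrank_of_lt h2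
    have h4 : finrank F (K φ) + 1 = finrank F W := by
      rw [hK]; simp only
      rw [Submodule.finrank_map_subtype_eq]
      exact finrank_ker_add_one hφ0
    have h5 : K φ = W ⊓ X :=
      Submodule.eq_of_le_of_finrank_le h1 (by omega)
    exact hφBad (Finset.mem_filter.mpr ⟨hφΦ, X, hX, h5⟩)

lemma exists_avoid (r : ℕ) (hrn : r + 1 ≤ n) (S : Finset (Submodule F (Fin n → F)))
    (hS : ∀ X ∈ S, X ≠ ⊤)
    (hcard : S.card * (Fintype.card F - 1) + 1 < Fintype.card F ^ (r+1)) :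
    ∃ Y : Submodule F (Fin n → F), finrank F Y = r ∧ ∀ X ∈ S, ¬ Y ≤ X := by
  suffices h : ∀ j, j ≤ n - r → ∃ W : Submodule F (Fin n → F),
      finrank F W = n - j ∧ ∀ X ∈ S, ¬ W ≤ X by
    obtain ⟨W, h1, h2⟩ := h (n - r) le_rfl
    exact ⟨W, by omega, h2⟩
  intro j
  induction j with
  | zero =>
    intro _
    refine ⟨⊤, ?_, fun X hX hle => hS X hX (top_le_iff.mp hle)⟩
    rw [finrank_top, Module.finrank_fin_fun]
    omega
  | succ j ih =>
    intro hj
    obtain ⟨W, hW1, hW2⟩ := ih (by omega)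
    have hfr : r + 1 ≤ finrank F W := by omega
    have hq1 : 1 ≤ Fintype.card F := Fintype.card_pos
    obtain ⟨W', _, hrank, hW'⟩ := step S W hW2
      (lt_of_lt_of_le hcard (Nat.pow_le_pow_right hq1 hfr))
    exact ⟨W', by omega, hW'⟩

lemma upper (r : ℕ) (hrn : r + 1 ≤ n) :
    ∃ S : Finset (Submodule F (Fin n → F)),
      S.card * (Fintype.card F - 1) = Fintype.card F ^ (r+1) - 1 ∧
      (∀ X ∈ S, finrank F X = n - 1) ∧
      (∀ Y : Submodule F (Fin n → F), finrank F Y = r → ∃ X ∈ S, Y ≤ X) := by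
  classical
  set π : (Fin n → F) →ₗ[F] (Fin (r+1) → F) :=
    LinearMap.funLeft F F (Fin.castLE hrn) with hπdef
  have hπ : Function.Surjective π :=
    LinearMap.funLeft_surjective_of_injective _ _ _ (Fin.castLE_injective hrn)
  have hcomp0 : ∀ ψ : Dual F (Fin (r+1) → F), ψ ≠ 0 → ψ.comp π ≠ 0 := by
    intro ψ hψ h0
    apply hψ
    refine LinearMap.ext fun v => ?_
    obtain ⟨x, rfl⟩ := hπ v
    simpa using LinearMap.congr_fun h0 x
  letI : Finite (Dual F (Fin (r+1) → F)) := Module.finite_of_finite F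
  letI : Fintype (Dual F (Fin (r+1) → F)) := Fintype.ofFinite _
  set K : Dual F (Fin (r+1) → F) → Submodule F (Fin n → F) :=
    fun ψ => LinearMap.ker (ψ.comp π) with hK
  set Φ : Finset (Dual F (Fin (r+1) → F)) := Finset.univ.erase 0 with hΦ
  have hΦcard : Φ.card = Fintype.card F ^ (r+1) - 1 := by
    rw [hΦ, Finset.card_erase_of_mem (mem_univ _), Finset.card_univ,
      card_eq_pow_finrank (K := F), Subspace.dual_finrank_eq, Module.finrank_fin_fun]
  refine ⟨Φ.image K, ?_, ?_, ?_⟩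
  · have hsum := Finset.card_eq_sum_card_image K Φ
    have hfib : ∀ H ∈ Φ.image K, (Φ.filter fun ψ => K ψ = H).card = Fintype.card F - 1 := by
      intro H hH
      obtain ⟨ψ, hψΦ, rfl⟩ := Finset.mem_image.mp hH
      have hψ0 : ψ ≠ 0 := (Finset.mem_erase.mp hψΦ).1
      have heq : (Φ.filter fun φ => K φ = K ψ) = (Finset.univ.erase (0:F)).image (· • ψ) := by
        apply Finset.Subset.antisymm
        · intro φ hφ
          have hφ0 : φ ≠ 0 := (Finset.mem_erase.mp (Finset.mem_filter.mp hφ).1).1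
          have hφK : K φ = K ψ := (Finset.mem_filter.mp hφ).2
          obtain ⟨c, hc⟩ := smul_of_ker_le_ker (hcomp0 ψ hψ0) (le_of_eq hφK.symm)
          have hφψ : φ = c • ψ := by
            refine LinearMap.ext fun v => ?_
            obtain ⟨x, rfl⟩ := hπ v
            simpa using LinearMap.congr_fun hc x
          have hc0 : c ≠ 0 := by
            rintro rfl
            rw [zero_smul] at hφψ
            exact hφ0 hφψ
          exact Finset.mem_image.mpr ⟨c, Finset.mem_erase.mpr ⟨hc0, mem_univ _⟩, hφψ.symm⟩
        · intro φ hφ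
          obtain ⟨c, hc, rfl⟩ := Finset.mem_image.mp hφ
          have hc0 : c ≠ 0 := (Finset.mem_erase.mp hc).1
          refine Finset.mem_filter.mpr ⟨Finset.mem_erase.mpr ⟨?_, mem_univ _⟩, ?_⟩
          · exact smul_ne_zero hc0 hψ0
          · rw [hK]
            simp only
            rw [LinearMap.smul_comp, LinearMap.ker_smul _ _ hc0]
      rw [heq, Finset.card_image_of_injective _ (smul_left_injective F hψ0),
        Finset.card_erase_of_mem (mem_univ _), Finset.card_univ]
    rw [Finset.sum_congr rfl hfib, Finset.sum_const, smul_eq_mul] at hsum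
    rw [← hsum, hΦcard]
  · intro X hX
    obtain ⟨ψ, hψΦ, rfl⟩ := Finset.mem_image.mp hX
    have hψ0 : ψ ≠ 0 := (Finset.mem_erase.mp hψΦ).1
    have := finrank_ker_add_one (hcomp0 ψ hψ0)
    rw [Module.finrank_fin_fun] at this
    rw [hK]
    simp only
    omega
  · intro Y hY
    have hlt : Submodule.map π Y < ⊤ := by
      refine lt_of_le_of_ne le_top ?_
      intro h
      have h1 : finrank F (Submodule.map π Y) ≤ r :=
        le_trans (Submodule.finrank_map_le _ _) (le_of_eq hY)
      have h2 := Submodule.finrank_mono h.symm.le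
      rw [finrank_top, Module.finrank_fin_fun] at h2
      omega
    obtain ⟨ψ, hψ0, hψbot⟩ :=
      Submodule.exists_dual_map_eq_bot_of_lt_top hlt inferInstance
    refine ⟨K ψ, Finset.mem_image.mpr ⟨ψ, Finset.mem_erase.mpr ⟨hψ0, mem_univ _⟩, rfl⟩, ?_⟩
    intro y hy
    have h1 : π y ∈ Submodule.map π Y := Submodule.mem_map_of_mem hy
    have h2 : ψ (π y) ∈ Submodule.map ψ (Submodule.map π Y) :=
      Submodule.mem_map_of_mem h1
    rw [hψbot] at h2
    exact LinearMap.mem_ker.mpr ((Submodule.mem_bot F).mp h2)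

end CoveringAux

/-- Exact value of $\mathcal{C}_q(n,n-1,r)$. -/
theorem covering_hyperplanes (q n r : ℕ) (hq : IsPrimePow q)
    (hr : 1 ≤ r) (hrn : r ≤ n - 1)
    (F : Type) [Field F] [Fintype F] (hF : Fintype.card F = q) :
    (coveringNumber F n (n - 1) r : ℚ) = ((q : ℚ) ^ (r + 1) - 1) / ((q : ℚ) - 1) := by
  subst hF
  have hq2 : 2 ≤ Fintype.card F := Fintype.one_lt_card
  have hn : r + 1 ≤ n := by omega
  obtain ⟨p, hp⟩ : ∃ p, Fintype.card F = p + 1 := ⟨Fintype.card F - 1, by omega⟩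
  have hp1 : 1 ≤ p := by omega
  set N : ℕ := ∑ i ∈ Finset.range (r+1), Fintype.card F ^ i with hN
  have hNq : p * N + 1 = (p+1) ^ (r+1) := by
    rw [hN]
    simp only [hp]
    exact CoveringAux.geom_aux p (r+1)
  have hc1 : Fintype.card F - 1 = p := by omega
  have hpow : Fintype.card F ^ (r+1) = (p+1) ^ (r+1) := by rw [hp]
  have key : coveringNumber F n (n - 1) r = N := by
    obtain ⟨S, hScard, hSrank, hScov⟩ := CoveringAux.upper (n := n) (F := F) r hn
    have hSN : S.card = N := by
      rw [hc1, hpow] at hScard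
      have hcomm : S.card * p = p * S.card := Nat.mul_comm _ _
      have : p * S.card = p * N := by omega
      exact Nat.eq_of_mul_eq_mul_left (by omega) this
    have hmem : N ∈ { m : ℕ | ∃ S : Finset (Submodule F (Fin n → F)),
        S.card = m ∧
        (∀ X ∈ S, finrank F X = n - 1) ∧
        (∀ Y : Submodule F (Fin n → F), finrank F Y = r → ∃ X ∈ S, Y ≤ X) } :=
      ⟨S, hSN, hSrank, hScov⟩
    refine le_antisymm (Nat.sInf_le hmem) (le_csInf ⟨N, hmem⟩ ?_)
    rintro m ⟨T, hTcard, hTrank, hTcov⟩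
    by_contra hlt
    push_neg at hlt
    have hT' : ∀ X ∈ T, X ≠ ⊤ := by
      intro X hX h
      have hfr := hTrank X hX
      rw [h, finrank_top, Module.finrank_fin_fun] at hfr
      omega
    have hcard2 : T.card * (Fintype.card F - 1) + 1 < Fintype.card F ^ (r+1) := by
      rw [hc1, hpow, hTcard]
      have h2 : (m + 1) * p ≤ N * p := Nat.mul_le_mul_right _ (by omega)
      have h3 : N * p = p * N := Nat.mul_comm _ _
      have h4 : (m+1) * p = m * p + p := by ring
      omega
    obtain ⟨Y, hY1, hY2⟩ := CoveringAux.exists_avoid r hn T hT' hcard2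
    obtain ⟨X, hX, hYX⟩ := hTcov Y hY1
    exact hY2 X hX hYX
  rw [key, hN]
  push_cast
  have hq1 : ((Fintype.card F : ℚ)) ≠ 1 := by
    have : (1:ℚ) < (Fintype.card F : ℚ) := by exact_mod_cast hq2
    exact this.ne'
  exact geom_sum_eq hq1 (r+1)
end

section
/- Let q be a prime power and let v ≥ 2, m ≥ 2, δ ≥ 0 be integers. Then 𝒞_q(vm+δ, vm−m+δ, v−1) = (q^{vm}−1)/(q^m−1). -/
open Module Polynomial

set_option linter.unusedSectionVars false
set_option maxHeartbeats 1000000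


theorem aux_finrank_map_mkQ {F : Type} [Field F] {V : Type} [AddCommGroup V] [Module F V]
    [FiniteDimensional F V] (p X : Submodule F V) (h : p ≤ X) :
    finrank F (X.map p.mkQ) + finrank F p = finrank F X := by
  have hrn := LinearMap.finrank_range_add_finrank_ker (p.mkQ.domRestrict X)
  have hr : LinearMap.range (p.mkQ.domRestrict X) = X.map p.mkQ := by
    ext y
    simp [LinearMap.mem_range, Submodule.mem_map, LinearMap.domRestrict_apply, Subtype.exists]
  have hk : LinearMap.ker (p.mkQ.domRestrict X) = p.comap X.subtype := by
    ext x
    simp [LinearMap.mem_ker, Submodule.mem_comap, Submodule.mkQ_apply,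
      Submodule.Quotient.mk_eq_zero]
  have hpk : finrank F (p.comap X.subtype) = finrank F p :=
    (Submodule.comapSubtypeEquivOfLe h).finrank_eq
  rw [hr, hk, hpk] at hrn
  exact hrn

theorem lower_bound (F : Type) [Field F] [Fintype F] (m : ℕ) (hm : 1 ≤ m) (v : ℕ) :
    ∀ (δ : ℕ) (V : Type) (_ : AddCommGroup V), ∀ (_ : Module F V) (_ : FiniteDimensional F V),
    finrank F V = v * m + δ →
    ∀ S : Finset (Submodule F V),
      (∀ X ∈ S, finrank F X + m = v * m + δ) →
      (∀ Y : Submodule F V, finrank F Y + 1 = v → ∃ X ∈ S, Y ≤ X) →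
      ∑ i ∈ Finset.range v, (Fintype.card F) ^ (m * i) ≤ S.card := by
  induction v with
  | zero => intro δ V _ _ _ _ S _ _; simp
  | succ v ih =>
    intro δ V _ _ _ hdim S hS hcov
    classical
    set q := Fintype.card F with hqdef
    have hq2 : 1 < q := Fintype.one_lt_card
    rcases Nat.eq_zero_or_pos v with hv0 | hv1
    · -- v = 0 : just need S nonempty
      subst hv0
      obtain ⟨X, hX, -⟩ := hcov ⊥ (by simp)
      simpa using Finset.card_pos.mpr ⟨X, hX⟩
    -- main case
    have hmlev : m ≤ v * m := Nat.le_mul_of_pos_left m hv1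
    set N := ∑ i ∈ Finset.range v, q ^ (m * i) with hNdef
    have hN1 : 1 ≤ N := by
      calc 1 = q ^ (m * 0) := by simp
      _ ≤ N := Finset.single_le_sum (f := fun i => q ^ (m * i)) (by intro i _; positivity)
            (Finset.mem_range.mpr hv1)
    haveI : Finite V := Module.finite_of_finite F
    haveI : Fintype V := Fintype.ofFinite V
    -- key: for each nonzero x, many elements of S contain x
    have key : ∀ x : V, x ≠ 0 → N ≤ (S.filter (fun X => x ∈ X)).card := by
      intro x hx
      set p : Submodule F V := Submodule.span F {x} with hp
      have hpx : x ∈ p := Submodule.mem_span_singleton_self x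
      have hp1 : finrank F p = 1 := finrank_span_singleton hx
      set S' := (S.filter (fun X => x ∈ X)).image (Submodule.map p.mkQ) with hS'
      have hfq := Submodule.finrank_quotient_add_finrank p
      have hdim' : finrank F (V ⧸ p) = v * m + (m + δ - 1) := by
        rw [hdim, hp1] at hfq
        have : (v + 1) * m = v * m + m := by ring
        omega
      have hcard' : N ≤ S'.card → N ≤ (S.filter (fun X => x ∈ X)).card :=
        fun h => h.trans Finset.card_image_le
      apply hcard'
      apply ih (m + δ - 1) (V ⧸ p) inferInstance inferInstance inferInstance hdim' S'
      · intro X' hX'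
        obtain ⟨X, hXf, rfl⟩ := Finset.mem_image.mp hX'
        obtain ⟨hXS, hxX⟩ := Finset.mem_filter.mp hXf
        have hpX : p ≤ X := by
          rw [hp]; exact Submodule.span_le.mpr (by simpa using hxX)
        have := aux_finrank_map_mkQ p X hpX
        have h2 := hS X hXS
        have : (v+1) * m = v * m + m := by ring
        omega
      · intro Y' hY'
        set Y := Y'.comap p.mkQ with hY
        have hpY : p ≤ Y := by
          intro y hy
          have h0 : p.mkQ y = 0 := (Submodule.Quotient.mk_eq_zero p).mpr hy
          show p.mkQ y ∈ Y'
          rw [h0]; exact Y'.zero_mem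
        have hmapY : Y.map p.mkQ = Y' :=
          Submodule.map_comap_eq_of_surjective (Submodule.mkQ_surjective p) Y'
        have hYrank : finrank F Y + 1 = v + 1 := by
          have := aux_finrank_map_mkQ p Y hpY
          rw [hmapY, hp1] at this
          omega
        obtain ⟨X, hXS, hYX⟩ := hcov Y hYrank
        refine ⟨X.map p.mkQ, ?_, ?_⟩
        · exact Finset.mem_image_of_mem _ (Finset.mem_filter.mpr ⟨hXS, hYX (hpY hpx)⟩)
        · rw [← hmapY]; exact Submodule.map_mono hYX
    -- double counting
    set U0 := Finset.univ.filter (fun x : V => x ≠ 0) with hU0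
    have hU0card : U0.card + 1 = q ^ ((v+1) * m + δ) := by
      rw [hU0, Finset.filter_ne', Finset.card_erase_of_mem (Finset.mem_univ 0)]
      have hcV : Fintype.card V = q ^ ((v+1)*m+δ) := by
        rw [card_eq_pow_finrank (K := F) (V := V), hdim]
      rw [Finset.card_univ]
      have : 1 ≤ Fintype.card V := Fintype.card_pos
      omega
    have hswap : ∑ x ∈ U0, (S.filter (fun X => x ∈ X)).card
        = ∑ X ∈ S, (U0.filter (fun x => x ∈ X)).card := by
      simp_rw [Finset.card_filter]
      exact Finset.sum_comm
    have hterm : ∀ X ∈ S, (U0.filter (fun x => x ∈ X)).card + 1 = q ^ (v * m + δ) := by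
      intro X hX
      have : U0.filter (fun x => x ∈ X) = (Finset.univ.filter (fun x => x ∈ X)).erase 0 := by
        rw [hU0, Finset.filter_ne', Finset.filter_erase]
      rw [this, Finset.card_erase_of_mem
        (Finset.mem_filter.mpr ⟨Finset.mem_univ _, X.zero_mem⟩)]
      have h1 : (Finset.univ.filter (fun x => x ∈ X)).card = Fintype.card X := by
        rw [Fintype.card_subtype]
      have h2 : Fintype.card X = q ^ finrank F X := card_eq_pow_finrank (K := F)
      have h3 := hS X hX
      have h4 : 1 ≤ Fintype.card X := Fintype.card_pos
      have h7 : finrank F X = v * m + δ := by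
        have hvm : (v+1) * m = v * m + m := by ring
        omega
      rw [h1, h2, h7]
      have h8 : 1 ≤ q ^ (v * m + δ) := Nat.one_le_pow _ _ (by omega)
      omega
    set A := q ^ m with hA
    set B := q ^ (v * m + δ) with hB
    have hA2 : 2 ≤ A := by
      calc 2 = 2 ^ 1 := rfl
      _ ≤ q ^ 1 := Nat.pow_le_pow_left hq2 1
      _ ≤ q ^ m := Nat.pow_le_pow_right (by omega) hm
    have hB1 : 1 ≤ B := Nat.one_le_pow _ _ (by omega)
    have hAB : q ^ ((v+1) * m + δ) = A * B := by
      rw [hA, hB, ← pow_add]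
      congr 1
      ring
    have hsum1 : U0.card * N ≤ ∑ x ∈ U0, (S.filter (fun X => x ∈ X)).card := by
      calc U0.card * N = ∑ _x ∈ U0, N := by rw [Finset.sum_const, smul_eq_mul]
      _ ≤ _ := Finset.sum_le_sum (fun x hx => key x (Finset.mem_filter.mp hx).2)
    have hsum2 : ∑ X ∈ S, (U0.filter (fun x => x ∈ X)).card = S.card * (B - 1) := by
      rw [Finset.sum_congr rfl (fun X hX => ?_), Finset.sum_const, smul_eq_mul]
      have := hterm X hX
      omega
    rw [hswap, hsum2] at hsum1
    have hU0' : U0.card = A * B - 1 := by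
      rw [hAB] at hU0card
      omega
    rw [hU0'] at hsum1
    -- strict inequality step
    have hid1 : (A * N) * (B - 1) + A * N = (A * B) * N := by
      have : (A * N) * (B - 1) + (A * N) * 1 = (A * N) * (B - 1 + 1) := by ring
      rw [mul_one] at this
      rw [this, Nat.sub_add_cancel hB1]
      ring
    have hid2 : (A * B - 1) * N + N = (A * B) * N := by
      have hab1 : 1 ≤ A * B := Nat.one_le_iff_ne_zero.mpr (by
        have : 0 < A * B := Nat.mul_pos (by omega) (by omega)
        omega)
      have : (A * B - 1) * N + 1 * N = (A * B - 1 + 1) * N := by ring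
      rw [one_mul] at this
      rw [this, Nat.sub_add_cancel hab1]
    have hNN : 2 * N ≤ A * N := Nat.mul_le_mul_right N hA2
    have hlt : (A * N) * (B - 1) < (A * B - 1) * N := by omega
    have hfin : (A * N) * (B - 1) < S.card * (B - 1) := lt_of_lt_of_le hlt hsum1
    have hlt2 : A * N < S.card := lt_of_mul_lt_mul_right hfin (Nat.zero_le _)
    have hgoal : ∑ i ∈ Finset.range (v+1), q ^ (m*i) = A * N + 1 := by
      rw [Finset.sum_range_succ']
      have hh : ∀ i, q ^ (m*(i+1)) = q ^ m * q ^ (m*i) := by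
        intro i; rw [← pow_add]; congr 1; ring
      simp only [hh]
      rw [← Finset.mul_sum]
      simp [hA, hNdef]
    rw [hgoal]
    omega


theorem ext_field_finrank (F : Type) [Field F] [Fintype F] (m : ℕ) (hm : m ≠ 0) :
    finrank F (SplittingField (X ^ (Fintype.card F ^ m) - X : F[X])) = m := by
  classical
  set q := Fintype.card F with hq
  have hq2 : 1 < q := Fintype.one_lt_card
  set g_poly : F[X] := X ^ q ^ m - X with hg
  set K := SplittingField g_poly with hK
  haveI : FiniteDimensional F K := by infer_instance
  haveI : Finite K := Module.finite_of_finite F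
  haveI : Fintype K := Fintype.ofFinite K
  set p := ringChar F with hp
  haveI hfact : Fact p.Prime := ⟨CharP.char_is_prime F p⟩
  haveI : CharP K p := charP_of_injective_algebraMap (algebraMap F K).injective p
  obtain ⟨nn, hnn⟩ := FiniteField.card F p
  have hqm : q ^ m = p ^ ((nn : ℕ) * m) := by
    rw [hq, hnn.2, ← pow_mul]
  have hpq : p ∣ q := by
    rw [hq, hnn.2]
    exact dvd_pow_self p (by exact_mod_cast nn.ne_zero)
  have hpqm : p ∣ q ^ m := hpq.trans (dvd_pow_self q hm)
  have aux : g_poly ≠ 0 := FiniteField.X_pow_card_pow_sub_X_ne_zero _ hm hq2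
  have key : Fintype.card (g_poly.rootSet K) = g_poly.natDegree :=
    card_rootSet_eq_natDegree (galois_poly_separable p _ hpqm)
      (SplittingField.splits g_poly)
  have nat_degree_eq : g_poly.natDegree = q ^ m :=
    FiniteField.X_pow_card_pow_sub_X_natDegree_eq _ hm hq2
  rw [nat_degree_eq] at key
  have hpow_card : ∀ r : F, r ^ q ^ m = r := by
    intro r; rw [hq]; exact FiniteField.pow_card_pow m r
  clear_value q p
  suffices hroot : g_poly.rootSet K = Set.univ by
    have e : (g_poly.rootSet K) ≃ K := (Equiv.setCongr hroot).trans (Equiv.Set.univ K)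
    have keyK : Fintype.card K = q ^ m := (Fintype.card_congr e).symm.trans key
    rw [card_eq_pow_finrank (K := F) (V := K), ← hq] at keyK
    exact Nat.pow_right_injective hq2 keyK
  rw [Set.eq_univ_iff_forall]
  suffices ∀ (x) (_ : x ∈ (⊤ : Subalgebra F K)), x ∈ g_poly.rootSet K by simpa
  rw [← SplittingField.adjoin_rootSet]
  simp_rw [Algebra.mem_adjoin_iff]
  intro x hx
  refine Subring.closure_induction ?_ ?_ ?_ ?_ ?_ ?_ hx <;> simp_rw [mem_rootSet_of_ne aux]
  · rintro x (⟨r, rfl⟩ | hx)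
    · simp only [g_poly, map_sub, map_pow, aeval_X]
      rw [← map_pow, hpow_card, sub_self]
    · rwa [mem_rootSet_of_ne aux] at hx
  · rw [← coeff_zero_eq_aeval_zero']
    simp only [g_poly, coeff_X_pow, coeff_X_zero, sub_zero, _root_.map_eq_zero, ite_eq_right_iff,
      one_ne_zero, coeff_sub]
    intro hn
    exact absurd (pow_eq_zero_iff hm |>.mp hn.symm) (by omega)
  · simp only [g_poly, map_sub, aeval_X_pow, aeval_X, map_one, one_pow, sub_self]
  · intro x y _ _ hx hy
    simp only [g_poly, aeval_X_pow, aeval_X, map_sub, sub_eq_zero] at hx hy ⊢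
    simp only [hqm] at hx hy ⊢
    rw [add_pow_char_pow, hx, hy]
  · intro x _ hx
    simp only [g_poly, sub_eq_zero, aeval_X_pow, aeval_X, map_sub, sub_neg_eq_add] at *
    simp only [hqm] at hx ⊢
    rw [neg_pow, hx, neg_one_pow_char_pow]
    ring
  · intro x y _ _ hx hy
    simp only [g_poly, aeval_X_pow, aeval_X, map_sub, mul_pow, sub_eq_zero] at hx hy ⊢
    rw [hx, hy]


section Upper

variable (F K : Type) [Field F] [Field K] [Algebra F K] [FiniteDimensional F K]
variable (v δ : ℕ)

private noncomputable def philin (a : Fin v → K) : (Fin v → K) →ₗ[K] K :=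
  ∑ i, a i • LinearMap.proj i

private theorem philin_apply (a x : Fin v → K) : philin K v a x = ∑ i, a i * x i := by
  simp [philin]

private noncomputable def psilin (a : Fin v → K) :
    ((Fin v → K) × (Fin δ → F)) →ₗ[F] K :=
  ((philin K v a).restrictScalars F).comp (LinearMap.fst F (Fin v → K) (Fin δ → F))

private theorem psilin_apply (a : Fin v → K) (y : (Fin v → K) × (Fin δ → F)) :
    psilin F K v δ a y = philin K v a y.1 := rfl

private noncomputable def XS (a : Fin v → K) : Submodule F ((Fin v → K) × (Fin δ → F)) :=
  LinearMap.ker (psilin F K v δ a)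

private theorem mem_XS (a : Fin v → K) (y : (Fin v → K) × (Fin δ → F)) :
    y ∈ XS F K v δ a ↔ philin K v a y.1 = 0 := by
  rw [XS, LinearMap.mem_ker, psilin_apply]

private theorem philin_surj (a : Fin v → K) (ha : a ≠ 0) :
    Function.Surjective (philin K v a) := by
  obtain ⟨i, hi⟩ : ∃ i, a i ≠ 0 := by
    by_contra h
    push_neg at h
    exact ha (funext fun i => h i)
  intro c
  refine ⟨Pi.single i ((a i)⁻¹ * c), ?_⟩
  rw [philin_apply]
  rw [Finset.sum_eq_single i]
  · rw [Pi.single_eq_same, ← mul_assoc, mul_inv_cancel₀ hi, one_mul]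
  · intro j _ hj
    rw [Pi.single_eq_of_ne hj, mul_zero]
  · intro h
    exact absurd (Finset.mem_univ i) h

private theorem XS_finrank (a : Fin v → K) (ha : a ≠ 0) :
    finrank F (XS F K v δ a) + finrank F K
      = finrank F ((Fin v → K) × (Fin δ → F)) := by
  have h := LinearMap.finrank_range_add_finrank_ker (psilin F K v δ a)
  have hsurj : Function.Surjective (psilin F K v δ a) := by
    intro c
    obtain ⟨x, hx⟩ := philin_surj K v a ha c
    exact ⟨(x, 0), hx⟩
  rw [LinearMap.range_eq_top.mpr hsurj, finrank_top] at h
  show finrank F (LinearMap.ker (psilin F K v δ a)) + finrank F K = _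
  omega

private theorem XS_smul (c : K) (hc : c ≠ 0) (a : Fin v → K) :
    XS F K v δ (c • a) = XS F K v δ a := by
  ext y
  rw [mem_XS, mem_XS]
  have : philin K v (c • a) y.1 = c * philin K v a y.1 := by
    rw [philin_apply, philin_apply, Finset.mul_sum]
    exact Finset.sum_congr rfl fun i _ => by simp [mul_assoc]
  rw [this, mul_eq_zero]
  simp [hc]

private theorem XS_cover (Y : Submodule F ((Fin v → K) × (Fin δ → F)))
    (hY : finrank F Y < v) : ∃ a : Fin v → K, a ≠ 0 ∧ Y ≤ XS F K v δ a := by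
  classical
  set b := Module.finBasis F Y with hb
  set u : Fin (finrank F Y) → (Fin v → K) := fun j => ((b j : (Fin v → K) × (Fin δ → F))).1
    with hu
  set Z : Submodule K (Fin v → K) := Submodule.span K (Set.range u) with hZ
  have hZle : ∀ y ∈ Y, y.1 ∈ Z := by
    intro y hy
    have hYspan : Submodule.span F
        (Set.range (fun j => (b j : (Fin v → K) × (Fin δ → F)))) = Y := by
      conv_rhs => rw [← Submodule.map_subtype_top Y, ← b.span_eq, Submodule.map_span]
      congr 1
      rw [← Set.range_comp]
      rfl
    rw [← hYspan] at hy
    -- y ∈ F-span of the basis vectors; apply fst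
    have : y.1 ∈ Submodule.span F (Set.range u) := by
      have hmap := Submodule.mem_map_of_mem
        (f := (LinearMap.fst F (Fin v → K) (Fin δ → F))) hy
      rw [Submodule.map_span] at hmap
      have himg : (LinearMap.fst F (Fin v → K) (Fin δ → F)) ''
          (Set.range (fun j => (b j : (Fin v → K) × (Fin δ → F)))) = Set.range u := by
        rw [← Set.range_comp]
        rfl
      rwa [himg] at hmap
    have hle := Submodule.span_le_restrictScalars F K (Set.range u)
    exact hle this
  have hZne : Z ≠ ⊤ := by
    intro htop
    have h1 : finrank K Z ≤ finrank F Y := by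
      have := finrank_span_le_card (R := K) (Set.range u)
      rw [← hZ] at this
      exact this.trans (by
        rw [Set.toFinset_range]
        exact (Finset.card_image_le).trans (by simp))
    rw [htop, finrank_top, finrank_pi] at h1
    simp at h1
    omega
  obtain ⟨f, hf0, hfbot⟩ := Submodule.exists_dual_map_eq_bot_of_lt_top
    (lt_top_iff_ne_top.mpr hZne) inferInstance
  have hZker : Z ≤ LinearMap.ker f := by
    intro z hz
    rw [LinearMap.mem_ker]
    have : f z ∈ Z.map f := Submodule.mem_map_of_mem hz
    rwa [hfbot, Submodule.mem_bot] at this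
  set a : Fin v → K := fun i => f (Pi.single i 1) with ha
  have hsingle : ∀ (i : Fin v) (c : K),
      (Pi.single i c : Fin v → K) = c • (Pi.single i 1 : Fin v → K) := by
    intro i c
    ext j
    by_cases h : j = i
    · subst h; simp
    · simp [Pi.single_eq_of_ne h]
  have hfa : ∀ x, philin K v a x = f x := by
    intro x
    conv_rhs => rw [← Finset.univ_sum_single x]
    rw [map_sum, philin_apply]
    refine Finset.sum_congr rfl fun i _ => ?_
    rw [hsingle i (x i), map_smul, smul_eq_mul, mul_comm]
  refine ⟨a, ?_, ?_⟩
  · intro h0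
    apply hf0
    apply LinearMap.ext
    intro x
    rw [LinearMap.zero_apply, ← hfa, h0, philin_apply]
    simp
  · intro y hy
    rw [mem_XS, hfa]
    exact hZker (hZle y hy)

end Upper

theorem upper_exists (F K : Type) [Field F] [Fintype F] [Field K] [Fintype K]
    [Algebra F K] [FiniteDimensional F K] (v δ : ℕ) :
    ∃ S : Finset (Submodule F ((Fin v → K) × (Fin δ → F))),
      S.card * (Fintype.card K - 1) ≤ Fintype.card K ^ v - 1 ∧
      (∀ X ∈ S, finrank F X + finrank F K = finrank F ((Fin v → K) × (Fin δ → F))) ∧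
      (∀ Y : Submodule F ((Fin v → K) × (Fin δ → F)),
        finrank F Y < v → ∃ X ∈ S, Y ≤ X) := by
  classical
  set A := Finset.univ.filter (fun a : Fin v → K => a ≠ 0) with hA
  refine ⟨A.image (XS F K v δ), ?_, ?_, ?_⟩
  · have hfib : ∀ b ∈ A.image (XS F K v δ),
        (Fintype.card K - 1) ≤ (A.filter (fun a => XS F K v δ a = b)).card := by
      intro bX hbX
      obtain ⟨a₀, ha₀A, rfl⟩ := Finset.mem_image.mp hbX
      have ha₀ : a₀ ≠ 0 := (Finset.mem_filter.mp ha₀A).2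
      set C := Finset.univ.filter (fun c : K => c ≠ 0) with hC
      have hmap : ∀ c ∈ C,
          c • a₀ ∈ A.filter (fun a => XS F K v δ a = XS F K v δ a₀) := by
        intro c hc
        have hc0 : c ≠ 0 := (Finset.mem_filter.mp hc).2
        exact Finset.mem_filter.mpr
          ⟨Finset.mem_filter.mpr ⟨Finset.mem_univ _, smul_ne_zero hc0 ha₀⟩,
            XS_smul F K v δ c hc0 a₀⟩
      have hinj : Set.InjOn (fun c : K => c • a₀) C := by
        intro c _ c' _ h
        obtain ⟨i, hi⟩ : ∃ i, a₀ i ≠ 0 := by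
          by_contra hcon; push_neg at hcon; exact ha₀ (funext hcon)
        have h2 := congrFun h i
        simp only [Pi.smul_apply, smul_eq_mul] at h2
        exact mul_right_cancel₀ hi h2
      calc Fintype.card K - 1 = C.card := by
            rw [hC, Finset.filter_ne', Finset.card_erase_of_mem (Finset.mem_univ 0),
              Finset.card_univ]
      _ = (C.image (fun c => c • a₀)).card := (Finset.card_image_of_injOn hinj).symm
      _ ≤ _ := Finset.card_le_card (fun x hx => by
            obtain ⟨c, hc, rfl⟩ := Finset.mem_image.mp hx
            exact hmap c hc)
    have hmain := Finset.mul_card_image_le_card A (Fintype.card K - 1) hfib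
    have hAcard : A.card = Fintype.card K ^ v - 1 := by
      rw [hA, Finset.filter_ne', Finset.card_erase_of_mem (Finset.mem_univ 0),
        Finset.card_univ]
      congr 1
      simp [Fintype.card_fun]
    rw [hAcard] at hmain
    rw [mul_comm]
    exact hmain
  · intro X hX
    obtain ⟨a, haA, rfl⟩ := Finset.mem_image.mp hX
    exact XS_finrank F K v δ a (Finset.mem_filter.mp haA).2
  · intro Y hY
    obtain ⟨a, ha0, hle⟩ := XS_cover F K v δ Y hY
    exact ⟨XS F K v δ a,
      Finset.mem_image_of_mem _ (Finset.mem_filter.mpr ⟨Finset.mem_univ _, ha0⟩), hle⟩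


theorem geom_nat (Q : ℕ) (hQ : 1 ≤ Q) (v : ℕ) :
    (Q - 1) * (∑ i ∈ Finset.range v, Q ^ i) + 1 = Q ^ v := by
  induction v with
  | zero => simp
  | succ v ih =>
    rw [Finset.sum_range_succ, Nat.mul_add]
    have h1 : (Q - 1) * Q ^ v + Q ^ v = Q * Q ^ v := by
      have h2 : Q - 1 + 1 = Q := Nat.sub_add_cancel hQ
      calc (Q - 1) * Q ^ v + Q ^ v = (Q - 1 + 1) * Q ^ v := by ring
      _ = Q * Q ^ v := by rw [h2]
    rw [pow_succ, mul_comm (Q ^ v) Q]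
    omega

/-- Exact values from normal spreads. -/
theorem normal_spread_value (q v m δ : ℕ) (hq : IsPrimePow q)
    (hv : 2 ≤ v) (hm : 2 ≤ m) :
    ∀ (F : Type) [Field F] [Fintype F], Fintype.card F = q →
    (coveringNumber F (v * m + δ) (v * m - m + δ) (v - 1) : ℚ) =
      ((q : ℚ) ^ (v * m) - 1) / ((q : ℚ) ^ m - 1) := by
  intro F _ _ hcardF
  classical
  have hq2 : 1 < q := by rw [← hcardF]; exact Fintype.one_lt_card
  have hmv : m ≤ v * m := by
    calc m = 1 * m := (one_mul m).symm
    _ ≤ v * m := Nat.mul_le_mul_right m (by omega)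
  set n := v * m + δ with hn
  set k := v * m - m + δ with hk
  set N := ∑ i ∈ Finset.range v, q ^ (m * i) with hN
  set Q := q ^ m with hQ
  have hQ2 : 2 ≤ Q := by
    calc 2 = 2 ^ 1 := rfl
    _ ≤ q ^ 1 := Nat.pow_le_pow_left hq2 1
    _ ≤ q ^ m := Nat.pow_le_pow_right (by omega) (by omega)
  have hNQ : N = ∑ i ∈ Finset.range v, Q ^ i := by
    rw [hN, hQ]
    exact Finset.sum_congr rfl fun i _ => by rw [← pow_mul]
  have hgeom : (Q - 1) * N + 1 = Q ^ v := by
    rw [hNQ]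
    exact geom_nat Q (by omega) v
  -- the extension field
  set K := SplittingField (X ^ (Fintype.card F ^ m) - X : F[X]) with hKdef
  haveI : FiniteDimensional F K :=
    inferInstanceAs (FiniteDimensional F (SplittingField (X ^ (Fintype.card F ^ m) - X : F[X])))
  haveI : Finite K := Module.finite_of_finite F
  haveI : Fintype K := Fintype.ofFinite K
  have hKrank : finrank F K = m := ext_field_finrank F m (by omega)
  have hcardK : Fintype.card K = Q := by
    rw [card_eq_pow_finrank (K := F) (V := K), hKrank, hcardF, hQ]
  -- dimensions of the model space
  have hWrank : finrank F ((Fin v → K) × (Fin δ → F)) = n := by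
    rw [Module.finrank_prod]
    have h1 : finrank F (Fin v → K) = m * v := by
      rw [← Module.finrank_mul_finrank F K (Fin v → K), hKrank, Module.finrank_pi K]
      simp
    have h2 : finrank F (Fin δ → F) = δ := Module.finrank_fin_fun F
    rw [h1, h2, hn, mul_comm]
  obtain ⟨S₀, hS₀card, hS₀dim, hS₀cov⟩ := upper_exists F K v δ
  -- transport to Fin n → F
  have hfr : finrank F ((Fin v → K) × (Fin δ → F)) = finrank F (Fin n → F) := by
    rw [hWrank, Module.finrank_fin_fun]
  set e : ((Fin v → K) × (Fin δ → F)) ≃ₗ[F] (Fin n → F) :=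
    LinearEquiv.ofFinrankEq _ _ hfr with he
  set S : Finset (Submodule F (Fin n → F)) :=
    S₀.image (Submodule.map (e : ((Fin v → K) × (Fin δ → F)) →ₗ[F] (Fin n → F))) with hS
  have hSdim : ∀ X ∈ S, finrank F X = k := by
    intro X hX
    obtain ⟨X₀, hX₀, rfl⟩ := Finset.mem_image.mp hX
    rw [LinearEquiv.finrank_map_eq e X₀]
    have := hS₀dim X₀ hX₀
    rw [hKrank, hWrank] at this
    omega
  have hScov : ∀ Y : Submodule F (Fin n → F), finrank F Y = v - 1 → ∃ X ∈ S, Y ≤ X := by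
    intro Y hY
    set Y₀ := Y.map (e.symm : (Fin n → F) →ₗ[F] ((Fin v → K) × (Fin δ → F))) with hY₀
    have hY₀rank : finrank F Y₀ < v := by
      rw [hY₀, LinearEquiv.finrank_map_eq e.symm Y, hY]
      omega
    obtain ⟨X₀, hX₀, hle⟩ := hS₀cov Y₀ hY₀rank
    refine ⟨X₀.map (e : _ →ₗ[F] _), Finset.mem_image_of_mem _ hX₀, ?_⟩
    rw [Submodule.map_equiv_eq_comap_symm]
    rw [← Submodule.map_le_iff_le_comap]
    exact hle
  have hScard : S.card ≤ N := by
    have h1 : S.card ≤ S₀.card := Finset.card_image_le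
    have h2 : S₀.card * (Q - 1) ≤ (Q - 1) * N := by
      rw [← hcardK] at hgeom ⊢
      calc S₀.card * (Fintype.card K - 1) ≤ Fintype.card K ^ v - 1 := hS₀card
      _ = (Fintype.card K - 1) * N := by omega
    have h3 : S.card * (Q - 1) ≤ N * (Q - 1) := by
      calc S.card * (Q - 1) ≤ S₀.card * (Q - 1) := Nat.mul_le_mul_right _ h1
      _ ≤ (Q - 1) * N := h2
      _ = N * (Q - 1) := mul_comm _ _
    exact Nat.le_of_mul_le_mul_right h3 (by omega)
  -- lower bound for every covering
  have hlow : ∀ c ∈ { c : ℕ | ∃ S' : Finset (Submodule F (Fin n → F)),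
      S'.card = c ∧
      (∀ X ∈ S', finrank F X = k) ∧
      (∀ Y : Submodule F (Fin n → F), finrank F Y = v - 1 → ∃ X ∈ S', Y ≤ X) },
      N ≤ c := by
    rintro c ⟨S', rfl, hdim', hcov'⟩
    have := lower_bound F m (by omega) v δ (Fin n → F) inferInstance inferInstance
      inferInstance (by rw [Module.finrank_fin_fun, hn]) S'
      (fun X hX => by have := hdim' X hX; rw [this, hk]; omega)
      (fun Y hY => hcov' Y (by omega))
    rw [hcardF] at this
    exact this
  -- our covering has cardinality exactly N
  have hSN : S.card = N := le_antisymm hScard (hlow S.card ⟨S, rfl, hSdim, hScov⟩)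
  have hmem : N ∈ { c : ℕ | ∃ S' : Finset (Submodule F (Fin n → F)),
      S'.card = c ∧
      (∀ X ∈ S', finrank F X = k) ∧
      (∀ Y : Submodule F (Fin n → F), finrank F Y = v - 1 → ∃ X ∈ S', Y ≤ X) } :=
    ⟨S, hSN, hSdim, hScov⟩
  have hcovN : coveringNumber F n k (v - 1) = N := by
    apply le_antisymm
    · exact Nat.sInf_le hmem
    · exact le_csInf ⟨N, hmem⟩ hlow
  rw [hcovN]
  -- final rational computation
  have hq1Q : (1:ℚ) < (q:ℚ) ^ m := by
    have : ((Q:ℕ):ℚ) = (q:ℚ) ^ m := by push_cast [hQ]; ring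
    rw [← this]
    exact_mod_cast hQ2.trans_lt' (by norm_num)
  rw [eq_div_iff (by linarith : ((q:ℚ) ^ m - 1) ≠ 0)]
  have hcast : (N : ℚ) = ∑ i ∈ Finset.range v, ((q:ℚ) ^ m) ^ i := by
    rw [hNQ]
    push_cast [hQ]
    exact Finset.sum_congr rfl fun i _ => by rw [← pow_mul]
  rw [hcast, geom_sum_mul]
  rw [← pow_mul, mul_comm m v]
end

section
/- Let k ≥ 3 be an integer. Then 𝒞_2(2k, k, 2) ≤ 2^{2k} + 6·(2^k−1). -/
open Module

noncomputable section CMRD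

namespace CMRDaux

abbrev K (k : ℕ) := GaloisField 2 k

/-- The `ZMod 2`-linear map `x ↦ a x + b x²`. -/
def fAB {k : ℕ} (a b : K k) : K k →ₗ[ZMod 2] K k where
  toFun x := a * x + b * x ^ 2
  map_add' x y := by
    rw [add_pow_char x y 2]; ring
  map_smul' r x := by
    simp only [RingHom.id_apply]
    rw [Algebra.smul_def, Algebra.smul_def, mul_pow, ← map_pow, ZMod.pow_card]
    ring

/-- Graph subspaces, part A of the covering design. -/
def XA {k : ℕ} (a b : K k) : Submodule (ZMod 2) (K k × K k) :=
  LinearMap.range (LinearMap.prod LinearMap.id (fAB a b))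

lemma mem_XA {k : ℕ} (a b : K k) (z : K k × K k) :
    z ∈ XA a b ↔ ∃ x, (x, a * x + b * x ^ 2) = z := by
  simp [XA, LinearMap.mem_range, LinearMap.prod_apply, fAB, Prod.ext_iff]

lemma finrank_XA {k : ℕ} (hk : k ≠ 0) (a b : K k) : finrank (ZMod 2) (XA a b) = k := by
  rw [XA, LinearMap.finrank_range_of_inj, GaloisField.finrank 2 hk]
  intro x y h
  exact congrArg Prod.fst h

lemma solveA {k : ℕ} {u v : K k} (p q : K k) (hu : u ≠ 0) (hv : v ≠ 0) (huv : u ≠ v) :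
    ∃ a b : K k, a * u + b * u ^ 2 = p ∧ a * v + b * v ^ 2 = q := by
  have hvu : v - u ≠ 0 := sub_ne_zero.2 (Ne.symm huv)
  set d := u * v * (v - u) with hd
  have hdne : d ≠ 0 := mul_ne_zero (mul_ne_zero hu hv) hvu
  refine ⟨(p * v ^ 2 - q * u ^ 2) / d, (q * u - p * v) / d, ?_, ?_⟩ <;>
  · field_simp
    ring

/-- Part B of the covering design. -/
def XB {k : ℕ} (φ : Dual (ZMod 2) (K k)) (u0 w0 : K k) : Submodule (ZMod 2) (K k × K k) :=
  (LinearMap.ker φ).map (LinearMap.inr (ZMod 2) (K k) (K k)) ⊔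
    Submodule.span (ZMod 2) {(u0, w0)}

lemma mem_XB_left {k : ℕ} (φ : Dual (ZMod 2) (K k)) (u0 w0 w : K k) (hw : φ w = 0) :
    ((0 : K k), w) ∈ XB φ u0 w0 := by
  apply Submodule.mem_sup_left
  exact ⟨w, hw, rfl⟩

lemma mem_XB_right {k : ℕ} (φ : Dual (ZMod 2) (K k)) (u0 w0 w' : K k) (hw : φ (w' - w0) = 0) :
    (u0, w') ∈ XB φ u0 w0 := by
  have : (u0, w') = ((0 : K k), w' - w0) + (u0, w0) := by
    simp [Prod.ext_iff]
  rw [this]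
  exact Submodule.add_mem _ (mem_XB_left φ u0 w0 _ hw)
    (Submodule.mem_sup_right (Submodule.subset_span rfl))

lemma finrank_XB {k : ℕ} (hk : k ≠ 0) {φ : Dual (ZMod 2) (K k)} {u0 : K k} (w0 : K k)
    (hφ : φ ≠ 0) (hu0 : u0 ≠ 0) : finrank (ZMod 2) (XB φ u0 w0) = k := by
  classical
  have hinj : Function.Injective (LinearMap.inr (ZMod 2) (K k) (K k)) := fun x y h => by
    simpa [Prod.ext_iff] using h
  have hker : finrank (ZMod 2) (LinearMap.ker φ) = k - 1 := by
    have hrn := LinearMap.finrank_range_add_finrank_ker φ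
    have hrange : LinearMap.range φ = ⊤ := by
      rcases eq_bot_or_eq_top (LinearMap.range φ) with h | h
      · exfalso; apply hφ; ext x
        have : φ x ∈ LinearMap.range φ := ⟨x, rfl⟩
        rw [h] at this; exact (Submodule.mem_bot (ZMod 2)).1 this
      · exact h
    rw [hrange, finrank_top, finrank_self, GaloisField.finrank 2 hk] at hrn
    omega
  have hmap : finrank (ZMod 2) ((LinearMap.ker φ).map (LinearMap.inr (ZMod 2) (K k) (K k)))
      = k - 1 := by
    rw [← hker]
    exact (Submodule.equivMapOfInjective _ hinj _).symm.finrank_eq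
  have hspan : finrank (ZMod 2) (Submodule.span (ZMod 2) {((u0 : K k), w0)}) = 1 :=
    finrank_span_singleton (by simp [Prod.ext_iff, hu0])
  have hinf : (LinearMap.ker φ).map (LinearMap.inr (ZMod 2) (K k) (K k)) ⊓
      Submodule.span (ZMod 2) {((u0 : K k), w0)} = ⊥ := by
    rw [eq_bot_iff]
    rintro x ⟨⟨w, -, rfl⟩, hx2⟩
    rw [SetLike.mem_coe, Submodule.mem_span_singleton] at hx2
    obtain ⟨c, hc⟩ := hx2
    have h1 : c • u0 = 0 := congrArg Prod.fst hc
    rcases smul_eq_zero.1 h1 with h | h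
    · rw [h, zero_smul] at hc
      simp [← hc]
    · exact absurd h hu0
  have := Submodule.finrank_sup_add_finrank_inf_eq
    ((LinearMap.ker φ).map (LinearMap.inr (ZMod 2) (K k) (K k)))
    (Submodule.span (ZMod 2) {((u0 : K k), w0)})
  rw [hmap, hspan, hinf, finrank_bot] at this
  have hk1 : 1 ≤ k := Nat.one_le_iff_ne_zero.2 hk
  rw [XB]
  omega

/-- A linear equivalence `K ≃ Dual K`. -/
def e2 (k : ℕ) (hk : k ≠ 0) : K k ≃ₗ[ZMod 2] Dual (ZMod 2) (K k) :=
  Classical.choice (FiniteDimensional.nonempty_linearEquiv_of_finrank_eq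
    (by rw [Subspace.dual_finrank_eq]))

lemma exists_phi {k : ℕ} (hk : 3 ≤ k) (w1 w2 : K k) :
    ∃ φ : Dual (ZMod 2) (K k), φ ≠ 0 ∧ φ w1 = 0 ∧ φ w2 = 0 := by
  set L : Dual (ZMod 2) (K k) →ₗ[ZMod 2] (ZMod 2 × ZMod 2) :=
    LinearMap.prod (LinearMap.applyₗ w1) (LinearMap.applyₗ w2) with hL
  have hker : LinearMap.ker L ≠ ⊥ := by
    intro h
    have hinj : Function.Injective L := LinearMap.ker_eq_bot.1 h
    have hle := LinearMap.finrank_le_finrank_of_injective hinj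
    rw [Subspace.dual_finrank_eq, GaloisField.finrank 2 (by omega)] at hle
    have : finrank (ZMod 2) (ZMod 2 × ZMod 2) = 2 := by
      rw [finrank_prod, finrank_self]
    omega
  obtain ⟨φ, hφmem, hφne⟩ := (Submodule.ne_bot_iff _).1 hker
  refine ⟨φ, hφne, ?_, ?_⟩
  · exact congrArg Prod.fst (LinearMap.mem_ker.1 hφmem)
  · exact congrArg Prod.snd (LinearMap.mem_ker.1 hφmem)

lemma exists_g {k : ℕ} (hk : 3 ≤ k) : ∃ g : K k, g ≠ 0 ∧ g ≠ 1 := by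
  by_contra h
  push_neg at h
  have : Nat.card (K k) ≤ 2 := by
    have hs : (Set.univ : Set (K k)) ⊆ {0, 1} := by
      intro x _
      rcases eq_or_ne x 0 with h0 | h0
      · exact Or.inl h0
      · exact Or.inr (h x h0)
    have h1 : (Set.univ : Set (K k)).ncard ≤ ({0, 1} : Set (K k)).ncard :=
      Set.ncard_le_ncard hs (Set.toFinite _)
    rw [Set.ncard_univ] at h1
    exact h1.trans (le_trans (Set.ncard_insert_le _ _) (by simp))
  rw [GaloisField.card 2 k (by omega)] at this
  have : 2 ^ 3 ≤ 2 ^ k := Nat.pow_le_pow_right (by norm_num) hk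
  omega

open Classical in
def tOf {k : ℕ} (φ : Dual (ZMod 2) (K k)) : K k :=
  if h : ∃ x, φ x ≠ 0 then h.choose else 0

lemma tOf_spec {k : ℕ} {φ : Dual (ZMod 2) (K k)} (hφ : φ ≠ 0) : φ (tOf φ) = 1 := by
  have h : ∃ x, φ x ≠ 0 := by
    by_contra hc
    push_neg at hc
    exact hφ (LinearMap.ext fun x => by simpa using hc x)
  rw [tOf]
  rw [dif_pos h]
  have h2 := h.choose_spec
  revert h2
  generalize φ h.choose = a
  revert a; decide

lemma le_of_basis_mem {R M : Type*} [Field R] [AddCommGroup M] [Module R M]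
    {Y X : Submodule R M} (b : Basis (Fin 2) R Y)
    (h0 : ((b 0 : Y) : M) ∈ X) (h1 : ((b 1 : Y) : M) ∈ X) : Y ≤ X := by
  intro z hz
  have hrep := b.sum_repr ⟨z, hz⟩
  have hz2 : z = (b.repr ⟨z, hz⟩ 0) • ((b 0 : Y) : M) + (b.repr ⟨z, hz⟩ 1) • ((b 1 : Y) : M) := by
    have := congrArg (Submodule.subtype Y) hrep
    rw [Fin.sum_univ_two] at this
    simpa using this.symm
  rw [hz2]
  exact X.add_mem (X.smul_mem _ h0) (X.smul_mem _ h1)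

lemma char2_add_eq_zero {k : ℕ} {a b : K k} (h : a + b = 0) : a = b := by
  have h1 := neg_eq_of_add_eq_zero_left h
  rw [CharTwo.neg_eq] at h1
  exact h1.symm

lemma zmod2_eq_one {a : ZMod 2} (h : a ≠ 0) : a = 1 := by revert h; revert a; decide

lemma main {k : ℕ} (hk : 3 ≤ k) :
    ∃ S : Finset (Submodule (ZMod 2) (K k × K k)),
      S.card ≤ 2 ^ (2 * k) + 6 * (2 ^ k - 1) ∧
      (∀ X ∈ S, finrank (ZMod 2) X = k) ∧
      (∀ Y : Submodule (ZMod 2) (K k × K k), finrank (ZMod 2) Y = 2 → ∃ X ∈ S, Y ≤ X) := by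
  classical
  have hk0 : k ≠ 0 := by omega
  haveI : Fintype (K k) := Fintype.ofFinite _
  obtain ⟨g, hg0, hg1⟩ := exists_g hk
  set e := e2 k hk0 with he
  -- the multipliers
  set cf : Fin 3 → K k := ![1, g, 1 + g] with hcf
  have hcfne : ∀ i, cf i ≠ 0 := by
    intro i
    fin_cases i
    · simp [hcf]
    · simpa [hcf] using hg0
    · simp only [hcf]
      intro h
      apply hg1
      have : g = -1 := by
        simpa [Matrix.cons_val_one] using eq_neg_of_add_eq_zero_right h
      rw [this, CharTwo.neg_eq]
  set φf : K k → Fin 3 → Dual (ZMod 2) (K k) :=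
    fun u0 i => (e u0).comp (LinearMap.mulLeft (ZMod 2) (cf i)) with hφf
  have hφfne : ∀ (u0 : K k), u0 ≠ 0 → ∀ i, φf u0 i ≠ 0 := by
    intro u0 hu0 i heq
    have heu : e u0 ≠ 0 := fun h => hu0 ((map_eq_zero_iff e e.injective).1 h)
    apply heu
    ext y
    have := congrArg (fun ψ => ψ ((cf i)⁻¹ * y)) heq
    simpa [hφf, LinearMap.mulLeft_apply, mul_inv_cancel_left₀ (hcfne i)] using this
  set wf : Dual (ZMod 2) (K k) → Fin 2 → K k := fun φ j => if j = 0 then 0 else tOf φ with hwf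
  set SA : Finset (Submodule (ZMod 2) (K k × K k)) :=
    (Finset.univ : Finset (K k × K k)).image (fun ab => XA ab.1 ab.2) with hSA
  set SB : Finset (Submodule (ZMod 2) (K k × K k)) :=
    ((Finset.univ.erase (0 : K k)) ×ˢ (Finset.univ : Finset (Fin 3 × Fin 2))).image
      (fun x => XB (φf x.1 x.2.1) x.1 (wf (φf x.1 x.2.1) x.2.2)) with hSB
  have hcardK : Fintype.card (K k) = 2 ^ k := by
    rw [← Nat.card_eq_fintype_card, GaloisField.card 2 k hk0]
  -- B covering lemma
  have coverB : ∀ (w2 u0 w' : K k), w2 ≠ 0 → u0 ≠ 0 →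
      ∃ X ∈ SB, ((0 : K k), w2) ∈ X ∧ (u0, w') ∈ X := by
    intro w2 u0 w' hw2 hu0
    -- find i with φf u0 i w2 = 0
    have hex : ∃ i, φf u0 i w2 = 0 := by
      by_cases h0 : φf u0 0 w2 = 0
      · exact ⟨0, h0⟩
      by_cases h1 : φf u0 1 w2 = 0
      · exact ⟨1, h1⟩
      refine ⟨2, ?_⟩
      have hsum : φf u0 2 w2 = φf u0 0 w2 + φf u0 1 w2 := by
        simp only [hφf, LinearMap.coe_comp, Function.comp_apply, LinearMap.mulLeft_apply, hcf]
        rw [← map_add]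
        congr 1
        simp [Matrix.cons_val_zero, Matrix.cons_val_one]
        ring
      rw [hsum, zmod2_eq_one h0, zmod2_eq_one h1]
      decide
    obtain ⟨i, hi⟩ := hex
    by_cases hw' : φf u0 i w' = 0
    · refine ⟨XB (φf u0 i) u0 (wf (φf u0 i) 0), ?_, ?_, ?_⟩
      · apply Finset.mem_image.2
        exact ⟨(u0, (i, 0)), by simp [Finset.mem_product, Finset.mem_erase, hu0], rfl⟩
      · exact mem_XB_left _ _ _ _ hi
      · apply mem_XB_right
        simp only [hwf, if_pos rfl, sub_zero]
        exact hw'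
    · refine ⟨XB (φf u0 i) u0 (wf (φf u0 i) 1), ?_, ?_, ?_⟩
      · apply Finset.mem_image.2
        exact ⟨(u0, (i, 1)), by simp [Finset.mem_product, Finset.mem_erase, hu0], rfl⟩
      · exact mem_XB_left _ _ _ _ hi
      · apply mem_XB_right
        simp only [hwf, if_neg (by decide : (1 : Fin 2) ≠ 0)]
        rw [map_sub, tOf_spec (hφfne u0 hu0 i), zmod2_eq_one hw']
        decide
  -- W covering lemma
  have coverW : ∀ (w1 w2 : K k),
      ∃ X ∈ SB, ((0 : K k), w1) ∈ X ∧ ((0 : K k), w2) ∈ X := by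
    intro w1 w2
    obtain ⟨φ, hφ, h1, h2⟩ := exists_phi hk w1 w2
    set u0 := e.symm φ with hu0def
    have hu0 : u0 ≠ 0 := fun h => hφ (by
      have := congrArg e h
      rw [e.apply_symm_apply] at this
      simpa using this)
    have hφeq : ∀ x, φf u0 0 x = φ x := by
      intro x
      simp [hφf, hcf, hu0def, LinearMap.mulLeft_apply, e.apply_symm_apply]
    refine ⟨XB (φf u0 0) u0 (wf (φf u0 0) 0), ?_, ?_, ?_⟩
    · apply Finset.mem_image.2
      exact ⟨(u0, (0, 0)), by simp [Finset.mem_product, Finset.mem_erase, hu0], rfl⟩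
    · exact mem_XB_left _ _ _ _ (by rw [hφeq]; exact h1)
    · exact mem_XB_left _ _ _ _ (by rw [hφeq]; exact h2)
  refine ⟨SA ∪ SB, ?_, ?_, ?_⟩
  · -- cardinality
    calc (SA ∪ SB).card ≤ SA.card + SB.card := Finset.card_union_le _ _
      _ ≤ 2 ^ (2 * k) + 6 * (2 ^ k - 1) := by
          have hA : SA.card ≤ 2 ^ (2 * k) := by
            calc SA.card ≤ (Finset.univ : Finset (K k × K k)).card := Finset.card_image_le
              _ = 2 ^ (2 * k) := by
                  rw [Finset.card_univ, Fintype.card_prod, hcardK, ← pow_add, two_mul]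
          have hB : SB.card ≤ 6 * (2 ^ k - 1) := by
            calc SB.card ≤ ((Finset.univ.erase (0 : K k)) ×ˢ
                (Finset.univ : Finset (Fin 3 × Fin 2))).card := Finset.card_image_le
              _ = (2 ^ k - 1) * 6 := by
                  rw [Finset.card_product, Finset.card_erase_of_mem (Finset.mem_univ _),
                    Finset.card_univ, Finset.card_univ, hcardK, Fintype.card_prod]
                  simp
              _ = 6 * (2 ^ k - 1) := by ring
          omega
  · -- dimensions
    intro X hX
    rcases Finset.mem_union.1 hX with h | h
    · obtain ⟨⟨a, b⟩, -, rfl⟩ := Finset.mem_image.1 h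
      exact finrank_XA hk0 a b
    · obtain ⟨⟨u0, i, j⟩, hmem, rfl⟩ := Finset.mem_image.1 h
      have hu0 : u0 ≠ 0 := by
        simp only [Finset.mem_product, Finset.mem_erase] at hmem
        exact hmem.1.1
      exact finrank_XB hk0 _ (hφfne u0 hu0 i) hu0
  · -- covering
    intro Y hY
    haveI : FiniteDimensional (ZMod 2) Y := inferInstance
    set b := finBasisOfFinrankEq (ZMod 2) Y hY with hb
    set y0 : K k × K k := ((b 0 : Y) : K k × K k) with hy0
    set y1 : K k × K k := ((b 1 : Y) : K k × K k) with hy1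
    have hcoe : Function.Injective ((↑) : Y → K k × K k) := Subtype.coe_injective
    have hne0 : y0 ≠ 0 := by
      intro h
      exact b.linearIndependent.ne_zero 0 (hcoe (by rw [← hy0, h]; simp))
    have hne1 : y1 ≠ 0 := by
      intro h
      exact b.linearIndependent.ne_zero 1 (hcoe (by rw [← hy1, h]; simp))
    have hne01 : y0 ≠ y1 := by
      intro h
      have : (0 : Fin 2) = 1 := b.injective (hcoe h)
      exact absurd this (by decide)
    -- we show: there is X in SA ∪ SB containing y0 and y1
    have key : ∃ X ∈ SA ∪ SB, y0 ∈ X ∧ y1 ∈ X := by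
      rcases eq_or_ne y0.1 0 with h00 | h00
      · rcases eq_or_ne y1.1 0 with h10 | h10
        · -- both in W
          obtain ⟨X, hXS, hm1, hm2⟩ := coverW y0.2 y1.2
          refine ⟨X, Finset.mem_union_right _ hXS, ?_, ?_⟩
          · rwa [show ((0 : K k), y0.2) = y0 from Prod.ext h00.symm rfl] at hm1
          · rwa [show ((0 : K k), y1.2) = y1 from Prod.ext h10.symm rfl] at hm2
        · -- y0 in W, y1 not
          have hw2 : y0.2 ≠ 0 := by
            intro h
            exact hne0 (Prod.ext h00 h)
          obtain ⟨X, hXS, hm1, hm2⟩ := coverB y0.2 y1.1 y1.2 hw2 h10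
          refine ⟨X, Finset.mem_union_right _ hXS, ?_, ?_⟩
          · rwa [show ((0 : K k), y0.2) = y0 from Prod.ext h00.symm rfl] at hm1
          · rwa [show (y1.1, y1.2) = y1 from rfl] at hm2
      · rcases eq_or_ne y1.1 0 with h10 | h10
        · -- y1 in W, y0 not
          have hw2 : y1.2 ≠ 0 := by
            intro h
            exact hne1 (Prod.ext h10 h)
          obtain ⟨X, hXS, hm1, hm2⟩ := coverB y1.2 y0.1 y0.2 hw2 h00
          refine ⟨X, Finset.mem_union_right _ hXS, ?_, ?_⟩
          · exact hm2
          · rwa [show ((0 : K k), y1.2) = y1 from Prod.ext h10.symm rfl] at hm1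
        · rcases eq_or_ne y0.1 y1.1 with heq | hne
          · -- same first coordinate: use y0 and y0 + y1
            have hz2 : y0.2 + y1.2 ≠ 0 := by
              intro h
              exact hne01 (Prod.ext heq (char2_add_eq_zero h))
            obtain ⟨X, hXS, hm1, hm2⟩ := coverB (y0.2 + y1.2) y0.1 y0.2 hz2 h00
            refine ⟨X, Finset.mem_union_right _ hXS, hm2, ?_⟩
            have hy1eq : y1 = ((0 : K k), y0.2 + y1.2) + (y0.1, y0.2) := by
              apply Prod.ext
              · simp [heq]
              · simp only [Prod.snd_add]
                rw [add_comm y0.2 y1.2, add_assoc, CharTwo.add_self_eq_zero, add_zero]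
            rw [hy1eq]
            exact X.add_mem hm1 hm2
          · -- generic case: part A
            obtain ⟨a, b', hab1, hab2⟩ := solveA y0.2 y1.2 h00 h10 hne
            refine ⟨XA a b', Finset.mem_union_left _ ?_, ?_, ?_⟩
            · exact Finset.mem_image.2 ⟨(a, b'), Finset.mem_univ _, rfl⟩
            · exact (mem_XA a b' y0).2 ⟨y0.1, Prod.ext rfl hab1⟩
            · exact (mem_XA a b' y1).2 ⟨y1.1, Prod.ext rfl hab2⟩
    obtain ⟨X, hXS, hm0, hm1⟩ := key
    exact ⟨X, hXS, le_of_basis_mem b hm0 hm1⟩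

end CMRDaux

end CMRD

/-- $\mathcal{C}_2(2k,k,2) \le 2^{2k} + 6(2^k-1)$. -/
theorem simple_CMRD_bound (k : ℕ) (hk : 3 ≤ k) :
    coveringNumber (ZMod 2) (2 * k) k 2 ≤ 2 ^ (2 * k) + 6 * (2 ^ k - 1) := by
  classical
  obtain ⟨S, hcard, hdim, hcov⟩ := CMRDaux.main hk
  have hk0 : k ≠ 0 := by omega
  have hfr : finrank (ZMod 2) (CMRDaux.K k × CMRDaux.K k) = 2 * k := by
    rw [finrank_prod, GaloisField.finrank 2 hk0, two_mul]
  have hfr2 : finrank (ZMod 2) (Fin (2 * k) → ZMod 2) = 2 * k := by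
    rw [finrank_pi, Fintype.card_fin]
  obtain ⟨e⟩ := FiniteDimensional.nonempty_linearEquiv_of_finrank_eq
    (M := CMRDaux.K k × CMRDaux.K k) (M' := Fin (2 * k) → ZMod 2) (hfr.trans hfr2.symm)
  set S' : Finset (Submodule (ZMod 2) (Fin (2 * k) → ZMod 2)) :=
    S.image (fun X => X.map (e : (CMRDaux.K k × CMRDaux.K k) →ₗ[ZMod 2] Fin (2 * k) → ZMod 2))
    with hS'
  have hmem : S'.card ∈ { m : ℕ | ∃ S : Finset (Submodule (ZMod 2) (Fin (2 * k) → ZMod 2)),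
      S.card = m ∧
      (∀ X ∈ S, finrank (ZMod 2) X = k) ∧
      (∀ Y : Submodule (ZMod 2) (Fin (2 * k) → ZMod 2), finrank (ZMod 2) Y = 2 →
        ∃ X ∈ S, Y ≤ X) } := by
    refine ⟨S', rfl, ?_, ?_⟩
    · intro X' hX'
      obtain ⟨X, hXS, rfl⟩ := Finset.mem_image.1 hX'
      rw [LinearEquiv.finrank_map_eq e X]
      exact hdim X hXS
    · intro Y hY
      have hY' : finrank (ZMod 2) (Y.map (e.symm :
          (Fin (2 * k) → ZMod 2) →ₗ[ZMod 2] CMRDaux.K k × CMRDaux.K k)) = 2 := by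
        rw [LinearEquiv.finrank_map_eq e.symm Y]
        exact hY
      obtain ⟨X, hXS, hle⟩ := hcov _ hY'
      refine ⟨X.map (e : (CMRDaux.K k × CMRDaux.K k) →ₗ[ZMod 2] Fin (2 * k) → ZMod 2),
        Finset.mem_image.2 ⟨X, hXS, rfl⟩, ?_⟩
      intro x hx
      exact ⟨e.symm x, hle ⟨x, hx, rfl⟩, by simp⟩
  calc coveringNumber (ZMod 2) (2 * k) k 2 ≤ S'.card := Nat.sInf_le hmem
    _ ≤ S.card := Finset.card_image_le
    _ ≤ 2 ^ (2 * k) + 6 * (2 ^ k - 1) := hcard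
end
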